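/- arXiv:1807.11612 — 8 statements merged into one kernel-verified Lean document; each statement's English description precedes it below -/
import Mathlib

section
/- Let G₀ be bounded selfadjoint positive definite, J a hermitian symmetry commuting with G₀, and S bounded selfadjoint with |(Sψ,ψ)| ≤ b(G₀ψ,ψ) for all ψ, where b < 1. Set G = G₀ + S, H = JG, H₀ = JG₀. Then the spectrum of H avoids the interval (−α, α) where α = (1−b)·inf{|λ| : λ ∈ σ(H₀)}; equivalently every λ ∈ σ(H) satisfies |λ| ≥ α. -/
open scoped InnerProductSpace NNReal ENNReal

theorem aux_cstar {A : Type*} [CStarAlgebra A] [PartialOrder A] [StarOrderedRing A]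
    (J G₀ S : A) (hJsa : IsSelfAdjoint J) (hJinv : J * J = 1) (hJcomm : J * G₀ = G₀ * J)
    (hG₀sa : IsSelfAdjoint G₀) (hG₀unit : IsUnit G₀) (hG₀nn : (0:A) ≤ G₀)
    (hSsa : IsSelfAdjoint S)
    (b : ℝ) (hb : b < 1) (hb0 : 0 ≤ b)
    (hS1 : S ≤ algebraMap ℝ A b * G₀) (hS2 : -(algebraMap ℝ A b * G₀) ≤ S) :
    ∀ lam ∈ spectrum ℂ (J * (G₀ + S)),
      (1 - b) * sInf ((fun z : ℂ => ‖z‖) '' spectrum ℂ (J * G₀)) ≤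
        ‖lam‖ := by
  intro lam hlam
  rw [spectrum.mem_iff] at hlam
  haveI : Nontrivial A := by
    by_contra h
    rw [not_nontrivial_iff_subsingleton] at h
    exact hlam (isUnit_of_subsingleton _)
  set m := sInf ((fun z : ℂ => ‖z‖) '' spectrum ℂ (J * G₀)) with hm_def
  by_contra hcon
  push_neg at hcon
  -- square root of G₀
  set Q := CFC.sqrt G₀ with hQdef
  have hQnn : (0:A) ≤ Q := CFC.sqrt_nonneg G₀
  have hQsa : IsSelfAdjoint Q := .of_nonneg hQnn
  have hQ2 : Q * Q = G₀ := CFC.sqrt_mul_sqrt_self G₀ hG₀nn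
  have hQunit : IsUnit Q := by
    obtain ⟨u, hu⟩ := hG₀unit
    have hcomm : Commute (u : A) Q := by
      show (u : A) * Q = Q * u
      rw [hu, ← hQ2, mul_assoc]
    rw [isUnit_iff_exists]
    refine ⟨↑u⁻¹ * Q, ?_, ?_⟩
    · have h2 : Q * ↑u⁻¹ = ↑u⁻¹ * Q := hcomm.symm.units_inv_right
      rw [← mul_assoc, h2, mul_assoc, hQ2, ← hu, Units.inv_mul]
    · rw [mul_assoc, hQ2, ← hu, Units.inv_mul]
  -- the inverse square root R
  set uQ : Aˣ := hQunit.unit with huQ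
  have huQc : (uQ : A) = Q := hQunit.unit_spec
  set R : A := ↑uQ⁻¹ with hRdef
  have hRQ : R * Q = 1 := by rw [hRdef, ← huQc, Units.inv_mul]
  have hQR : Q * R = 1 := by rw [hRdef, ← huQc, Units.mul_inv]
  have hRsa : IsSelfAdjoint R := by
    have h1 : star R * Q = 1 := by
      have := congrArg star hQR
      rwa [star_mul, star_one, hQsa] at this
    calc star R = star R * (Q * R) := by rw [hQR, mul_one]
      _ = (star R * Q) * R := (mul_assoc _ _ _).symm
      _ = R := by rw [h1, one_mul]
  have hRG₀R : R * G₀ * R = 1 := by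
    rw [← hQ2, ← mul_assoc R Q Q, mul_assoc (R * Q) Q R, hRQ, one_mul, hQR]
  -- norms
  have hJnorm : ‖J‖ = 1 := by
    have h1 : ‖J‖ * ‖J‖ = 1 := by
      rw [← CStarRing.norm_star_mul_self (x := J), hJsa, hJinv, norm_one]
    nlinarith [norm_nonneg J]
  have hRRnorm : ‖R * R‖ = ‖R‖ * ‖R‖ := by
    have h := CStarRing.norm_star_mul_self (x := R)
    rwa [hRsa] at h
  -- conjugation identity
  have hconj : ∀ a : A, Q * (R * a * R * Q) = a := by
    intro a
    calc Q * (R * a * R * Q) = (Q * R) * (a * (R * Q)) := by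
          simp only [mul_assoc]
      _ = a := by rw [hQR, hRQ, one_mul, mul_one]
  -- spectral bound : m * ‖R * R‖ ≤ 1
  have hz : ∀ z ∈ spectrum ℂ (R * R), m * ‖z‖ ≤ 1 := by
    intro z hzmem
    set uRR : Aˣ := uQ⁻¹ * uQ⁻¹ with huRR
    have huRRc : (uRR : A) = R * R := rfl
    have hz0 : z ≠ 0 := by
      rintro rfl
      exact ((spectrum.zero_mem_iff ℂ).mp (huRRc ▸ hzmem)) uRR.isUnit
    have hzinv : (z⁻¹ : ℂ) ∈ spectrum ℂ G₀ := by
      have h1 : ((Units.mk0 z hz0 : ℂˣ) : ℂ) ∈ spectrum ℂ ((uRR : A)) := by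
        rwa [huRRc]
      have h2 := spectrum.inv_mem_iff.mp h1
      have h3 : ((uRR⁻¹ : Aˣ) : A) = G₀ := by
        rw [huRR, mul_inv_rev, inv_inv, Units.val_mul, huQc, hQ2]
      rwa [h3] at h2
    have hH2 : (J * G₀) ^ 2 = G₀ ^ 2 := by
      rw [pow_two, pow_two, ← mul_assoc, mul_assoc J G₀ J, ← hJcomm, ← mul_assoc, hJinv,
        one_mul]
    have himg : ((z⁻¹ : ℂ)) ^ 2 ∈ (fun k : ℂ => k ^ 2) '' spectrum ℂ (J * G₀) := by
      rw [← spectrum.map_pow (J * G₀) 2, hH2, spectrum.map_pow]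
      exact ⟨z⁻¹, hzinv, rfl⟩
    obtain ⟨μ, hμmem, hμ2'⟩ := himg
    have hμ2 : μ ^ 2 = (z⁻¹ : ℂ) ^ 2 := hμ2'
    have habsμ : ‖μ‖ = (‖z‖)⁻¹ := by
      have h2 : ‖μ‖ ^ 2 = ((‖z‖)⁻¹) ^ 2 := by
        rw [← norm_pow, hμ2, norm_pow, norm_inv]
      have h := congrArg Real.sqrt h2
      rwa [Real.sqrt_sq (norm_nonneg _),
        Real.sqrt_sq (inv_nonneg.mpr (norm_nonneg _))] at h
    have hmμ : m ≤ ‖μ‖ := by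
      apply csInf_le
      · exact ⟨0, by rintro y ⟨w, _, rfl⟩; exact norm_nonneg _⟩
      · exact ⟨μ, hμmem, rfl⟩
    have hzpos : 0 < ‖z‖ := norm_pos_iff.mpr hz0
    have hle : m ≤ (‖z‖)⁻¹ := habsμ ▸ hmμ
    calc m * ‖z‖ ≤ (‖z‖)⁻¹ * ‖z‖ :=
          mul_le_mul_of_nonneg_right hle hzpos.le
      _ = 1 := inv_mul_cancel₀ hzpos.ne'
  have hmRR : m * ‖R * R‖ ≤ 1 := by
    have hRRsa : IsSelfAdjoint (R * R) := by
      rw [IsSelfAdjoint, star_mul, hRsa]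
    rcases CStarAlgebra.norm_or_neg_norm_mem_spectrum hRRsa with h | h
    · have h2 := hz _ (spectrum.algebraMap_mem ℂ h)
      simp only [Complex.coe_algebraMap, Complex.norm_real, norm_norm] at h2
      exact h2
    · have h2 := hz _ (spectrum.algebraMap_mem ℂ h)
      simp only [Complex.coe_algebraMap, Complex.norm_real, norm_neg, norm_norm] at h2
      exact h2
  -- norm bound on T = R S R
  set T : A := R * S * R with hTdef
  have hTsa : IsSelfAdjoint T := by
    rw [IsSelfAdjoint, hTdef, star_mul, star_mul, hRsa, hSsa, ← mul_assoc R S R]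
  have hT1 : T ≤ algebraMap ℝ A b := by
    have h1 := star_left_conjugate_le_conjugate hS1 R
    rw [hRsa] at h1
    have h2 : R * (algebraMap ℝ A b * G₀) * R = algebraMap ℝ A b := by
      rw [← mul_assoc, ← Algebra.commutes b R, mul_assoc, mul_assoc, ← mul_assoc R G₀ R,
        hRG₀R, mul_one]
    rwa [h2] at h1
  have hT2 : algebraMap ℝ A (-b) ≤ T := by
    have h1 := star_left_conjugate_le_conjugate hS2 R
    rw [hRsa] at h1
    have h2 : R * (-(algebraMap ℝ A b * G₀)) * R = algebraMap ℝ A (-b) := by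
      rw [mul_neg, neg_mul, map_neg]
      congr 1
      rw [← mul_assoc, ← Algebra.commutes b R, mul_assoc, mul_assoc, ← mul_assoc R G₀ R,
        hRG₀R, mul_one]
    rwa [h2] at h1
  have hTnorm : ‖T‖ ≤ b := by
    have hup : ∀ x ∈ spectrum ℝ T, x ≤ b := (le_algebraMap_iff_spectrum_le (a := T) hTsa).mp hT1
    have hlo : ∀ x ∈ spectrum ℝ T, -b ≤ x :=
      (algebraMap_le_iff_le_spectrum (a := T) hTsa).mp hT2
    rw [← hTsa.toReal_spectralRadius_eq_norm]
    have hbound : spectralRadius ℝ T ≤ ENNReal.ofReal b := by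
      rw [spectralRadius]
      refine iSup₂_le fun k hk => ?_
      have hks : |k| ≤ b := abs_le.mpr ⟨hlo k hk, hup k hk⟩
      calc (‖k‖₊ : ℝ≥0∞) = ENNReal.ofReal |k| := by
            rw [← Real.norm_eq_abs, ofReal_norm, enorm_eq_nnnorm]
        _ ≤ ENNReal.ofReal b := ENNReal.ofReal_le_ofReal hks
    calc (spectralRadius ℝ T).toReal ≤ (ENNReal.ofReal b).toReal :=
          ENNReal.toReal_mono ENNReal.ofReal_ne_top hbound
      _ = b := ENNReal.toReal_ofReal hb0
  -- norm bound on K = R J R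
  set K : A := R * J * R with hKdef
  have hKnorm : ‖K‖ ≤ ‖R * R‖ := by
    calc ‖R * J * R‖ ≤ ‖R * J‖ * ‖R‖ := norm_mul_le _ _
      _ ≤ (‖R‖ * ‖J‖) * ‖R‖ := by gcongr; exact norm_mul_le _ _
      _ = ‖R‖ * ‖R‖ := by rw [hJnorm]; ring
      _ = ‖R * R‖ := hRRnorm.symm
  -- main contradiction
  set c : A := algebraMap ℂ A lam with hcdef
  have hcnorm : ‖c‖ = ‖lam‖ := by
    rw [hcdef, norm_algebraMap']
  have habs : ‖lam‖ * ‖R * R‖ < 1 - b := by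
    rcases eq_or_lt_of_le (norm_nonneg (R * R)) with h | h
    · rw [← h, mul_zero]; linarith
    · calc ‖lam‖ * ‖R * R‖ < ((1 - b) * m) * ‖R * R‖ :=
            mul_lt_mul_of_pos_right hcon h
        _ = (1 - b) * (m * ‖R * R‖) := by ring
        _ ≤ (1 - b) * 1 := mul_le_mul_of_nonneg_left hmRR (by linarith)
        _ = 1 - b := mul_one _
  set X : A := c * K - T with hXdef
  have hXnorm : ‖X‖ < 1 := by
    calc ‖X‖ ≤ ‖c * K‖ + ‖T‖ := norm_sub_le _ _
      _ ≤ ‖c‖ * ‖K‖ + b := by gcongr; exact norm_mul_le _ _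
      _ ≤ ‖lam‖ * ‖R * R‖ + b := by
          rw [hcnorm]; gcongr
      _ < (1 - b) + b := by linarith
      _ = 1 := by ring
  have hXunit : IsUnit ((1 : A) - X) := (Units.oneSub X hXnorm).isUnit
  have hJunit : IsUnit J := isUnit_iff_exists.mpr ⟨J, hJinv, hJinv⟩
  have hJ' : Q * (c * (R * J * R) * Q) = c * J := by
    calc Q * (c * (R * J * R) * Q)
        = Q * (c * (R * J * R * Q)) := by rw [mul_assoc]
      _ = (Q * c) * (R * J * R * Q) := by rw [← mul_assoc]
      _ = (c * Q) * (R * J * R * Q) := by rw [← Algebra.commutes lam Q]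
      _ = c * (Q * (R * J * R * Q)) := by rw [mul_assoc]
      _ = c * J := by rw [hconj]
  have e1 : Q * ((1 - X) * Q) = G₀ + S - c * J := by
    have h1 : Q * (T * Q) = S := by rw [hTdef]; exact hconj S
    have h2 : Q * (c * K * Q) = c * J := by rw [hKdef]; exact hJ'
    calc Q * ((1 - X) * Q) = Q * (Q - (c * K * Q - T * Q)) := by
          rw [hXdef, sub_mul, one_mul, sub_mul]
      _ = Q * Q - (Q * (c * K * Q) - Q * (T * Q)) := by rw [mul_sub, mul_sub]
      _ = G₀ - (c * J - S) := by rw [hQ2, h2, h1]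
      _ = G₀ + S - c * J := by abel
  have hJcJ : J * (c * J) = c := by
    rw [← mul_assoc, ← Algebra.commutes lam J, mul_assoc, hJinv, mul_one]
  have hfact : c - J * (G₀ + S) = (-J) * (Q * ((1 - X) * Q)) := by
    have h := calc (-J) * (Q * ((1 - X) * Q)) = (-J) * (G₀ + S - c * J) := by rw [e1]
      _ = -(J * (G₀ + S - c * J)) := neg_mul _ _
      _ = -(J * (G₀ + S) - J * (c * J)) := by rw [mul_sub]
      _ = J * (c * J) - J * (G₀ + S) := neg_sub _ _
      _ = c - J * (G₀ + S) := by rw [hJcJ]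
    exact h.symm
  rw [hfact] at hlam
  exact hlam (hJunit.neg.mul (hQunit.mul (hXunit.mul hQunit)))

/-- the spectrum of `H = J(G₀ + S)` avoids `(-α, α)` with
`α = (1-b)·inf |σ(JG₀)|`: every `λ ∈ σ(H)` satisfies `|λ| ≥ α`. -/
theorem stmt_3 {E : Type*} [NormedAddCommGroup E] [InnerProductSpace ℂ E] [CompleteSpace E]
    (J G₀ S : E →L[ℂ] E)
    (hJsa : IsSelfAdjoint J) (hJinv : J * J = 1) (hJcomm : J * G₀ = G₀ * J)
    (hG₀sa : IsSelfAdjoint G₀) (γ : ℝ) (hγ : 0 < γ)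
    (hG₀pos : ∀ ψ : E, γ * ‖ψ‖ ^ 2 ≤ (⟪G₀ ψ, ψ⟫_ℂ).re)
    (hSsa : IsSelfAdjoint S) (b : ℝ) (hb : b < 1)
    (hSb : ∀ ψ : E, |(⟪S ψ, ψ⟫_ℂ).re| ≤ b * (⟪G₀ ψ, ψ⟫_ℂ).re) :
    ∀ lam ∈ spectrum ℂ (J * (G₀ + S)),
      (1 - b) * sInf ((fun z : ℂ => ‖z‖) '' spectrum ℂ (J * G₀)) ≤
        ‖lam‖ := by
  intro lam hlam
  haveI : Nontrivial (E →L[ℂ] E) := by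
    by_contra h
    rw [not_nontrivial_iff_subsingleton] at h
    exact (spectrum.mem_iff.mp hlam) (isUnit_of_subsingleton _)
  haveI : Nontrivial E := by
    by_contra h
    rw [not_nontrivial_iff_subsingleton] at h
    haveI : Subsingleton (E →L[ℂ] E) := ⟨fun f g => by ext x; exact Subsingleton.elim _ _⟩
    exact not_subsingleton_iff_nontrivial.mpr ‹Nontrivial (E →L[ℂ] E)› this
  obtain ⟨ψ, hψ⟩ := exists_ne (0 : E)
  have hb0 : 0 ≤ b := by
    have h1 := hSb ψ
    have h2 := hG₀pos ψ
    have h3 : 0 < ‖ψ‖ ^ 2 := by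
      have : 0 < ‖ψ‖ := norm_pos_iff.mpr hψ
      positivity
    have hre : 0 < (⟪G₀ ψ, ψ⟫_ℂ).re := lt_of_lt_of_le (by positivity) h2
    have h4 : 0 ≤ b * (⟪G₀ ψ, ψ⟫_ℂ).re := le_trans (abs_nonneg _) h1
    have h5 : 0 * (⟪G₀ ψ, ψ⟫_ℂ).re ≤ b * (⟪G₀ ψ, ψ⟫_ℂ).re := by rw [zero_mul]; exact h4
    exact le_of_mul_le_mul_right h5 hre
  -- the algebraMap applied
  have halg : ∀ (r : ℝ) (x : E), (algebraMap ℝ (E →L[ℂ] E) r) x = (r : ℂ) • x := by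
    intro r x
    simp [Algebra.algebraMap_eq_smul_one]
  have halgsa : ∀ r : ℝ, IsSelfAdjoint (algebraMap ℝ (E →L[ℂ] E) r) := by
    intro r
    rw [IsSelfAdjoint, Algebra.algebraMap_eq_smul_one, star_smul, star_one, star_trivial]
  -- G₀ is nonnegative
  have hG₀nn : (0 : E →L[ℂ] E) ≤ G₀ := by
    rw [ContinuousLinearMap.nonneg_iff_isPositive]
    refine ⟨ContinuousLinearMap.isSelfAdjoint_iff_isSymmetric.mp hG₀sa, fun x => ?_⟩
    have h1 := hG₀pos x
    have h2 : (0:ℝ) ≤ γ * ‖x‖ ^ 2 := by positivity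
    exact le_trans h2 h1
  -- G₀ is a unit
  have hγle : algebraMap ℝ (E →L[ℂ] E) γ ≤ G₀ := by
    rw [ContinuousLinearMap.le_def]
    refine ⟨ContinuousLinearMap.isSelfAdjoint_iff_isSymmetric.mp (hG₀sa.sub (halgsa γ)), fun x => ?_⟩
    show (0:ℝ) ≤ (⟪(G₀ - algebraMap ℝ (E →L[ℂ] E) γ) x, x⟫_ℂ).re
    rw [ContinuousLinearMap.sub_apply, inner_sub_left, Complex.sub_re, halg,
      inner_smul_left, Complex.conj_ofReal, Complex.re_ofReal_mul]
    have hx : (⟪x, x⟫_ℂ).re = ‖x‖ ^ 2 := by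
      rw [← RCLike.re_to_complex, inner_self_eq_norm_sq]
    rw [hx]
    have := hG₀pos x
    linarith
  have hG₀unit : IsUnit G₀ := by
    by_contra h
    have h0 : (0:ℝ) ∈ spectrum ℝ G₀ := (spectrum.zero_mem_iff ℝ).mpr h
    have := (algebraMap_le_iff_le_spectrum (a := G₀) hG₀sa).mp hγle 0 h0
    linarith
  -- order bounds on S
  have hbG₀ : ∀ x : E, ((algebraMap ℝ (E →L[ℂ] E) b * G₀) x) = (b:ℂ) • (G₀ x) := by
    intro x
    rw [ContinuousLinearMap.mul_apply, halg]
  have hbG₀sa : IsSelfAdjoint (algebraMap ℝ (E →L[ℂ] E) b * G₀) := by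
    rw [IsSelfAdjoint, star_mul, halgsa b, hG₀sa, ← Algebra.commutes b G₀]
  have hS1 : S ≤ algebraMap ℝ (E →L[ℂ] E) b * G₀ := by
    rw [ContinuousLinearMap.le_def]
    refine ⟨ContinuousLinearMap.isSelfAdjoint_iff_isSymmetric.mp (hbG₀sa.sub hSsa), fun x => ?_⟩
    show (0:ℝ) ≤ (⟪(algebraMap ℝ (E →L[ℂ] E) b * G₀ - S) x, x⟫_ℂ).re
    rw [ContinuousLinearMap.sub_apply, inner_sub_left, Complex.sub_re, hbG₀,
      inner_smul_left, Complex.conj_ofReal, Complex.re_ofReal_mul]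
    have := abs_le.mp (hSb x)
    linarith [this.2]
  have hS2 : -(algebraMap ℝ (E →L[ℂ] E) b * G₀) ≤ S := by
    rw [ContinuousLinearMap.le_def]
    refine ⟨ContinuousLinearMap.isSelfAdjoint_iff_isSymmetric.mp (hSsa.sub hbG₀sa.neg), fun x => ?_⟩
    show (0:ℝ) ≤ (⟪(S - -(algebraMap ℝ (E →L[ℂ] E) b * G₀)) x, x⟫_ℂ).re
    rw [sub_neg_eq_add, ContinuousLinearMap.add_apply, inner_add_left, Complex.add_re, hbG₀,
      inner_smul_left, Complex.conj_ofReal, Complex.re_ofReal_mul]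
    have := abs_le.mp (hSb x)
    linarith [this.1]
  exact aux_cstar J G₀ S hJsa hJinv hJcomm hG₀sa hG₀unit hG₀nn hSsa b hb hb0 hS1 hS2 lam hlam
end

section
/- Let G be bounded selfadjoint positive definite, J a hermitian symmetry, and G' = G^{1/2}(I + Δ)G^{1/2} where Δ is bounded selfadjoint with ‖Δ‖ ≤ κ < 1. If λ ∈ ℝ satisfies κ < reldist(λ, σ(JG)), where reldist(λ, Ω) = inf_{μ∈Ω} |(μ−λ)/μ|, then λ ∈ ρ(JG'), i.e., JG' − λ is boundedly invertible. -/
open scoped InnerProductSpace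

/-- Relative distance of a point to a set in `ℂ`. -/
noncomputable def relDist (lam : ℂ) (Ω : Set ℂ) : ℝ :=
  sInf ((fun μ : ℂ => ‖(μ - lam) / μ‖) '' Ω)

/-- if `κ < reldist(λ, σ(JG))` then `λ ∈ ρ(JG')` for
`G' = G^{1/2}(I + Δ)G^{1/2}`, `‖Δ‖ ≤ κ < 1`. -/
theorem stmt_4 {E : Type*} [NormedAddCommGroup E] [InnerProductSpace ℂ E] [CompleteSpace E]
    (J G Ghalf Ginvhalf Δ : E →L[ℂ] E)
    (hJsa : IsSelfAdjoint J) (hJinv : J * J = 1)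
    (hGsa : IsSelfAdjoint G) (γ : ℝ) (hγ : 0 < γ)
    (hGpos : ∀ ψ : E, γ * ‖ψ‖ ^ 2 ≤ (⟪G ψ, ψ⟫_ℂ).re)
    (hGhsa : IsSelfAdjoint Ghalf) (hGhsq : Ghalf * Ghalf = G)
    (hGhpos : ∀ ψ : E, 0 ≤ (⟪Ghalf ψ, ψ⟫_ℂ).re)
    (hinv1 : Ghalf * Ginvhalf = 1) (hinv2 : Ginvhalf * Ghalf = 1)
    (hΔsa : IsSelfAdjoint Δ) (κ : ℝ) (hΔκ : ‖Δ‖ ≤ κ) (hκ : κ < 1)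
    (G' : E →L[ℂ] E) (hG' : G' = Ghalf * (1 + Δ) * Ghalf)
    (lam : ℝ) (hlam : κ < relDist (lam : ℂ) (spectrum ℂ (J * G))) :
    (lam : ℂ) ∉ spectrum ℂ (J * G') := by
  -- self-adjointness of Ginvhalf
  have hGinvsa : IsSelfAdjoint Ginvhalf := by
    have h1 : star Ginvhalf * Ghalf = 1 := by
      have : star Ginvhalf * Ghalf = star (Ghalf * Ginvhalf) := by
        rw [star_mul, hGhsa.star_eq]
      rw [this, hinv1, star_one]
    calc star Ginvhalf = star Ginvhalf * (Ghalf * Ginvhalf) := by rw [hinv1, mul_one]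
      _ = (star Ginvhalf * Ghalf) * Ginvhalf := by rw [mul_assoc]
      _ = Ginvhalf := by rw [h1, one_mul]
  set B : E →L[ℂ] E := Ginvhalf * J * Ginvhalf with hB
  set S : E →L[ℂ] E := Ghalf * J * Ghalf with hS
  have hSB : S * B = 1 := by
    have h : S * B = Ghalf * (J * ((Ghalf * Ginvhalf) * J)) * Ginvhalf := by
      rw [hS, hB]; noncomm_ring
    rw [h, hinv1, one_mul, ← mul_assoc, mul_assoc Ghalf J J, hJinv, mul_one, hinv1]
  have hBS : B * S = 1 := by
    have h : B * S = Ginvhalf * (J * ((Ginvhalf * Ghalf) * J)) * Ghalf := by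
      rw [hS, hB]; noncomm_ring
    rw [h, hinv2, one_mul, ← mul_assoc, mul_assoc Ginvhalf J J, hJinv, mul_one, hinv2]
  let uGh : (E →L[ℂ] E)ˣ := ⟨Ghalf, Ginvhalf, hinv1, hinv2⟩
  let uS : (E →L[ℂ] E)ˣ := ⟨S, B, hSB, hBS⟩
  let uJ : (E →L[ℂ] E)ˣ := ⟨J, J, hJinv, hJinv⟩
  let uJG : (E →L[ℂ] E)ˣ := uJ * uGh * uGh
  have huJG : (uJG : E →L[ℂ] E) = J * G := by
    show J * Ghalf * Ghalf = J * G
    rw [mul_assoc, hGhsq]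
  -- spectrum of J*G equals spectrum of S
  have hspec : spectrum ℂ (J * G) = spectrum ℂ S := by
    have h := spectrum.units_conjugate (R := ℂ) (a := J * G) (u := uGh)
    have h2 : (uGh : E →L[ℂ] E) * (J * G) * ((uGh⁻¹ : (E →L[ℂ] E)ˣ) : E →L[ℂ] E) = S := by
      show Ghalf * (J * G) * Ginvhalf = S
      rw [← hGhsq, hS]
      calc Ghalf * (J * (Ghalf * Ghalf)) * Ginvhalf
          = Ghalf * J * Ghalf * (Ghalf * Ginvhalf) := by noncomm_ring
        _ = Ghalf * J * Ghalf := by rw [hinv1, mul_one]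
    rw [h2] at h
    exact h.symm
  set d : ℝ := relDist (lam : ℂ) (spectrum ℂ (J * G)) with hd
  have hκ0 : (0:ℝ) ≤ κ := (norm_nonneg Δ).trans hΔκ
  have hd0 : 0 < d := lt_of_le_of_lt hκ0 hlam
  have hbdd : BddBelow ((fun μ : ℂ => ‖(μ - (lam:ℂ)) / μ‖) '' spectrum ℂ (J * G)) := by
    refine ⟨0, fun x hx => ?_⟩
    obtain ⟨μ, _, rfl⟩ := hx
    positivity
  have hle : ∀ w ∈ spectrum ℂ (J * G), d ≤ ‖(w - (lam:ℂ)) / w‖ := by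
    intro w hw
    exact csInf_le hbdd ⟨w, hw, rfl⟩
  -- the operator A = 1 - lam • B
  set A : E →L[ℂ] E := 1 - (lam : ℂ) • B with hA
  -- key spectral estimate
  have key : ∀ μ : ℂ, μ ∈ spectrum ℂ A → d ≤ ‖μ‖ := by
    intro μ hμ
    by_cases hl0 : (lam : ℂ) = 0
    · -- A = 1, so μ = 1
      have hA1 : A = 1 := by rw [hA, hl0, zero_smul, sub_zero]
      have hμ1 : μ = 1 := by
        by_contra hne
        rw [hA1, spectrum.mem_iff] at hμ
        apply hμ
        have : algebraMap ℂ (E →L[ℂ] E) μ - 1 = algebraMap ℂ (E →L[ℂ] E) (μ - 1) := by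
          rw [map_sub, map_one]
        rw [this]
        exact (isUnit_iff_ne_zero.mpr (sub_ne_zero.mpr hne)).map (algebraMap ℂ (E →L[ℂ] E))
      -- σ(J*G) is nonempty since d > 0
      have hne : (spectrum ℂ (J * G)).Nonempty := by
        by_contra hcon
        rw [Set.not_nonempty_iff_eq_empty] at hcon
        have : d = 0 := by
          rw [hd, relDist, hcon, Set.image_empty, Real.sInf_empty]
        exact absurd this hd0.ne'
      obtain ⟨w, hw⟩ := hne
      have hw0 : w ≠ 0 := spectrum.ne_zero_of_mem_of_unit (huJG ▸ hw : (w : ℂ) ∈ spectrum ℂ (uJG : E →L[ℂ] E))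
      have := hle w hw
      rw [hl0, sub_zero, div_self hw0] at this
      rwa [hμ1]
    · -- lam ≠ 0
      set z : ℂ := (1 - μ) / (lam : ℂ) with hz
      have hlz : (lam : ℂ) * z = 1 - μ := by
        rw [hz]; field_simp
      have hzB : z ∈ spectrum ℂ B := by
        rw [spectrum.mem_iff] at hμ ⊢
        intro hu
        apply hμ
        have heq : algebraMap ℂ (E →L[ℂ] E) μ - A = (-(lam : ℂ)) • (algebraMap ℂ (E →L[ℂ] E) z - B) := by
          simp only [Algebra.algebraMap_eq_smul_one, hA, smul_sub, smul_smul]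
          have hc : -(lam : ℂ) * z = μ - 1 := by rw [hz]; field_simp; ring
          rw [hc, neg_smul, sub_neg_eq_add, sub_smul, one_smul]
          abel
        rw [heq]
        have hunit : IsUnit ((Units.mk0 (-(lam:ℂ)) (neg_ne_zero.mpr hl0)) •
            (algebraMap ℂ (E →L[ℂ] E) z - B)) := by
          rw [isUnit_smul_iff]; exact hu
        simpa [Units.smul_def] using hunit
      have hzne : z ≠ 0 := spectrum.ne_zero_of_mem_of_unit
        (a := uS⁻¹) (hzB : z ∈ spectrum ℂ ((uS⁻¹ : (E →L[ℂ] E)ˣ) : E →L[ℂ] E))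
      have hwS : z⁻¹ ∈ spectrum ℂ S := by
        have h := (spectrum.inv_mem_iff (r := Units.mk0 z hzne) (a := uS⁻¹)).mp hzB
        rw [inv_inv] at h
        show z⁻¹ ∈ spectrum ℂ (uS : E →L[ℂ] E)
        simpa using h
      have hwJG : z⁻¹ ∈ spectrum ℂ (J * G) := by rw [hspec]; exact hwS
      have hcomp : (z⁻¹ - (lam:ℂ)) / z⁻¹ = μ := by
        rw [sub_div, div_self (inv_ne_zero hzne), div_eq_mul_inv, inv_inv, hlz]
        ring
      have := hle _ hwJG
      rwa [hcomp] at this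
  -- A is selfadjoint
  have hBsa : IsSelfAdjoint B := by
    show star B = B
    rw [hB, star_mul, star_mul, hGinvsa.star_eq, hJsa.star_eq, mul_assoc]
  have hAsa : IsSelfAdjoint A := by
    show star A = A
    rw [hA, star_sub, star_one, star_smul, hBsa.star_eq, Complex.star_def,
      Complex.conj_ofReal]
  -- A is invertible
  have h0A : (0:ℂ) ∉ spectrum ℂ A := by
    intro h
    have := key 0 h
    simp at this
    exact absurd this hd0.not_ge
  have hAu : IsUnit A := by rwa [spectrum.zero_notMem_iff] at h0A
  obtain ⟨uA, huA⟩ := hAu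
  -- the inverse is selfadjoint
  have hAinv_sa : IsSelfAdjoint ((uA⁻¹ : (E →L[ℂ] E)ˣ) : E →L[ℂ] E) := by
    show star ((uA⁻¹ : (E →L[ℂ] E)ˣ) : E →L[ℂ] E) = ((uA⁻¹ : (E →L[ℂ] E)ˣ) : E →L[ℂ] E)
    have h1 : star ((uA⁻¹ : (E →L[ℂ] E)ˣ) : E →L[ℂ] E) * A = 1 := by
      have : star ((uA⁻¹ : (E →L[ℂ] E)ˣ) : E →L[ℂ] E) * A
          = star (A * ((uA⁻¹ : (E →L[ℂ] E)ˣ) : E →L[ℂ] E)) := by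
        rw [star_mul, hAsa.star_eq]
      rw [this, ← huA, uA.mul_inv, star_one]
    calc star ((uA⁻¹ : (E →L[ℂ] E)ˣ) : E →L[ℂ] E)
        = star ((uA⁻¹ : (E →L[ℂ] E)ˣ) : E →L[ℂ] E) * (A * ((uA⁻¹ : (E →L[ℂ] E)ˣ) : E →L[ℂ] E)) := by
          rw [← huA, uA.mul_inv, mul_one]
      _ = (star ((uA⁻¹ : (E →L[ℂ] E)ˣ) : E →L[ℂ] E) * A) * ((uA⁻¹ : (E →L[ℂ] E)ˣ) : E →L[ℂ] E) := by rw [mul_assoc]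
      _ = ((uA⁻¹ : (E →L[ℂ] E)ˣ) : E →L[ℂ] E) := by rw [h1, one_mul]
  -- norm bound on the inverse via spectral radius
  have hnorm : ‖((uA⁻¹ : (E →L[ℂ] E)ˣ) : E →L[ℂ] E)‖ ≤ d⁻¹ := by
    have hsr := hAinv_sa.spectralRadius_eq_nnnorm
    have hbound : spectralRadius ℂ ((uA⁻¹ : (E →L[ℂ] E)ˣ) : E →L[ℂ] E) ≤ (d⁻¹).toNNReal := by
      rw [spectralRadius]
      refine iSup₂_le fun ν hν => ?_
      have hν0 : ν ≠ 0 := spectrum.ne_zero_of_mem_of_unit (a := uA⁻¹) hν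
      have hνA : ν⁻¹ ∈ spectrum ℂ A := by
        have h := (spectrum.inv_mem_iff (r := Units.mk0 ν hν0) (a := uA⁻¹)).mp hν
        rw [inv_inv] at h
        rw [← huA]
        simpa using h
      have hdle : d ≤ ‖ν⁻¹‖ := key _ hνA
      rw [norm_inv] at hdle
      have habs : ‖ν‖ ≤ d⁻¹ := (le_inv_comm₀ hd0 (norm_pos_iff.mpr hν0)).mp hdle
      rw [ENNReal.coe_le_coe, ← NNReal.coe_le_coe, coe_nnnorm,
        Real.coe_toNNReal _ (inv_nonneg.mpr hd0.le)]
      exact habs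
    rw [hsr, ENNReal.coe_le_coe, ← NNReal.coe_le_coe, coe_nnnorm,
      Real.coe_toNNReal _ (inv_nonneg.mpr hd0.le)] at hbound
    exact hbound
  -- Neumann series argument
  set X : E →L[ℂ] E := -(((uA⁻¹ : (E →L[ℂ] E)ˣ) : E →L[ℂ] E) * Δ) with hX
  have hXnorm : ‖X‖ < 1 := by
    rw [hX, norm_neg]
    calc ‖((uA⁻¹ : (E →L[ℂ] E)ˣ) : E →L[ℂ] E) * Δ‖ ≤ ‖((uA⁻¹ : (E →L[ℂ] E)ˣ) : E →L[ℂ] E)‖ * ‖Δ‖ := norm_mul_le _ _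
      _ ≤ d⁻¹ * κ := mul_le_mul hnorm hΔκ (norm_nonneg _) (inv_nonneg.mpr hd0.le)
      _ < d⁻¹ * d := by exact mul_lt_mul_of_pos_left hlam (inv_pos.mpr hd0)
      _ = 1 := inv_mul_cancel₀ hd0.ne'
  have hTu : IsUnit ((1 + Δ) - (lam : ℂ) • B) := by
    have hfac : (1 + Δ) - (lam : ℂ) • B = A * (1 - X) := by
      have hAAinv : A * ((uA⁻¹ : (E →L[ℂ] E)ˣ) : E →L[ℂ] E) = 1 := by
        rw [← huA]; exact uA.mul_inv
      rw [hX, sub_neg_eq_add, mul_add, mul_one, ← mul_assoc, hAAinv, one_mul, hA]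
      abel
    rw [hfac]
    exact (huA ▸ uA.isUnit).mul (Units.oneSub X hXnorm).isUnit
  -- final factorization
  rw [spectrum.notMem_iff]
  have hfac2 : algebraMap ℂ (E →L[ℂ] E) (lam : ℂ) - J * G'
      = (J * Ghalf) * (-((1 + Δ) - (lam : ℂ) • B)) * Ghalf := by
    have h1 : (J * Ghalf) * ((1 + Δ) - (lam : ℂ) • B) * Ghalf
        = J * G' - (lam : ℂ) • 1 := by
      have e1 : (J * Ghalf) * ((lam : ℂ) • B) * Ghalf
          = (lam : ℂ) • ((J * Ghalf) * B * Ghalf) := by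
        simp [mul_smul_comm, smul_mul_assoc]
      have e2 : (J * Ghalf) * B * Ghalf = 1 := by
        rw [hB]
        calc J * Ghalf * (Ginvhalf * J * Ginvhalf) * Ghalf
            = J * ((Ghalf * Ginvhalf) * J) * (Ginvhalf * Ghalf) := by noncomm_ring
          _ = 1 := by rw [hinv1, one_mul, hinv2, mul_one, hJinv]
      have e3 : (J * Ghalf) * (1 + Δ) * Ghalf = J * G' := by
        rw [hG']; noncomm_ring
      rw [mul_sub, sub_mul, e1, e2, e3]
    rw [mul_neg, neg_mul, h1, neg_sub, Algebra.algebraMap_eq_smul_one]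
  rw [hfac2]
  exact ((uJ.isUnit.mul uGh.isUnit).mul hTu.neg).mul uGh.isUnit
end

section
/- Let G be bounded selfadjoint positive definite, J a hermitian symmetry, κ < 1, and G' = G^{1/2}(I+Δ)G^{1/2} with Δ selfadjoint, ‖Δ‖ ≤ κ. If (λ⁻, λ⁺) ⊂ ρ(JG) with 0 < λ⁻ < λ⁺, then ((1+κ)λ⁻, (1−κ)λ⁺) ⊂ ρ(JG'). -/
open scoped InnerProductSpace

/-- spectral gap inclusion, positive gap case:
`(λ⁻, λ⁺) ⊂ ρ(JG)` with `0 < λ⁻ < λ⁺` implies `((1+κ)λ⁻, (1-κ)λ⁺) ⊂ ρ(JG')`. -/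
theorem stmt_5 {E : Type*} [NormedAddCommGroup E] [InnerProductSpace ℂ E] [CompleteSpace E]
    (J G Ghalf Ginvhalf Δ : E →L[ℂ] E)
    (hJsa : IsSelfAdjoint J) (hJinv : J * J = 1)
    (hGsa : IsSelfAdjoint G) (γ : ℝ) (hγ : 0 < γ)
    (hGpos : ∀ ψ : E, γ * ‖ψ‖ ^ 2 ≤ (⟪G ψ, ψ⟫_ℂ).re)
    (hGhsa : IsSelfAdjoint Ghalf) (hGhsq : Ghalf * Ghalf = G)
    (hGhpos : ∀ ψ : E, 0 ≤ (⟪Ghalf ψ, ψ⟫_ℂ).re)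
    (hinv1 : Ghalf * Ginvhalf = 1) (hinv2 : Ginvhalf * Ghalf = 1)
    (hΔsa : IsSelfAdjoint Δ) (κ : ℝ) (hΔκ : ‖Δ‖ ≤ κ) (hκ : κ < 1)
    (G' : E →L[ℂ] E) (hG' : G' = Ghalf * (1 + Δ) * Ghalf)
    (lm lp : ℝ) (hlm : 0 < lm) (hlmp : lm < lp)
    (hgap : ∀ x : ℝ, lm < x → x < lp → (x : ℂ) ∉ spectrum ℂ (J * G)) :
    ∀ x : ℝ, (1 + κ) * lm < x → x < (1 - κ) * lp → (x : ℂ) ∉ spectrum ℂ (J * G') := by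
  intro x hx1 hx2
  have hκ0 : 0 ≤ κ := le_trans (norm_nonneg Δ) hΔκ
  have hlp : 0 < lp := lt_trans hlm hlmp
  have hxlm : lm < x := lt_of_le_of_lt (by nlinarith) hx1
  have hxlp : x < lp := lt_of_lt_of_le hx2 (by nlinarith)
  have hx0 : 0 < x := lt_trans hlm hxlm
  set A := Ghalf * J * Ghalf with hA
  have hAsa : IsSelfAdjoint A := by
    have := hJsa.conjugate Ghalf
    rwa [hGhsa.star_eq] at this
  -- the unit for conjugation
  set u : (E →L[ℂ] E)ˣ := ⟨Ghalf, Ginvhalf, hinv1, hinv2⟩ with hu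
  have hspecJG : spectrum ℂ (J * G) = spectrum ℂ A := by
    have h1 : J * G = ↑u⁻¹ * A * ↑u := by
      show J * G = Ginvhalf * (Ghalf * J * Ghalf) * Ghalf
      have : Ginvhalf * (Ghalf * J * Ghalf) * Ghalf
          = (Ginvhalf * Ghalf) * J * (Ghalf * Ghalf) := by noncomm_ring
      rw [this, hinv2, hGhsq, one_mul]
    rw [h1, spectrum.units_conjugate']
  have hspecJG' : spectrum ℂ (J * G') = spectrum ℂ (A * (1 + Δ)) := by
    have h1 : J * G' = ↑u⁻¹ * (A * (1 + Δ)) * ↑u := by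
      show J * G' = Ginvhalf * ((Ghalf * J * Ghalf) * (1 + Δ)) * Ghalf
      have : Ginvhalf * ((Ghalf * J * Ghalf) * (1 + Δ)) * Ghalf
          = (Ginvhalf * Ghalf) * (J * (Ghalf * (1 + Δ) * Ghalf)) := by noncomm_ring
      rw [this, hinv2, one_mul, hG']
    rw [h1, spectrum.units_conjugate']
  -- the real spectrum of A avoids (lm, lp)
  have hgapA : ∀ t ∈ spectrum ℝ A, t ≤ lm ∨ lp ≤ t := by
    intro t ht
    by_contra hcon
    push_neg at hcon
    have htC : (t : ℂ) ∈ spectrum ℂ A := by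
      have := spectrum.algebraMap_mem (S := ℂ) (A := E →L[ℂ] E) ht
      simpa using this
    exact hgap t hcon.1 hcon.2 (hspecJG ▸ htC)
  have hxA : x ∉ spectrum ℝ A := by
    intro hxmem
    rcases hgapA x hxmem with h | h
    · exact absurd hxlm (not_lt.mpr h)
    · exact absurd hxlp (not_lt.mpr h)
  -- continuous functions
  have hne : ∀ t ∈ spectrum ℝ A, t - x ≠ 0 := by
    intro t ht h
    exact hxA (by rwa [sub_eq_zero.mp h] at ht)
  have hcont_inv : ContinuousOn (fun t : ℝ => (t - x)⁻¹) (spectrum ℝ A) :=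
    ContinuousOn.inv₀ (by fun_prop) hne
  have hcont_g : ContinuousOn (fun t : ℝ => t * (t - x)⁻¹) (spectrum ℝ A) :=
    continuousOn_id.mul hcont_inv
  set S := cfc (fun t : ℝ => t * (t - x)⁻¹) A with hS
  -- A - x is a unit
  have hAx : cfc (fun t : ℝ => t - x) A = A - algebraMap ℝ (E →L[ℂ] E) x := by
    rw [cfc_sub (fun t : ℝ => t) (fun _ : ℝ => x) A, cfc_id' ℝ A, cfc_const x A]
  have hAxS : (A - algebraMap ℝ (E →L[ℂ] E) x) * S = A := by
    rw [← hAx, hS, ← cfc_mul _ _ A (by fun_prop) hcont_g]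
    calc cfc (fun t : ℝ => (t - x) * (t * (t - x)⁻¹)) A
        = cfc (fun t : ℝ => t) A := by
          apply cfc_congr
          intro t ht
          field_simp [hne t ht]
      _ = A := cfc_id' ℝ A
  have hAxunit : IsUnit (A - algebraMap ℝ (E →L[ℂ] E) x) := by
    have h1 : (A - algebraMap ℝ (E →L[ℂ] E) x) * cfc (fun t : ℝ => (t - x)⁻¹) A = 1 := by
      rw [← hAx, ← cfc_mul _ _ A (by fun_prop) hcont_inv]
      calc cfc (fun t : ℝ => (t - x) * (t - x)⁻¹) A
          = cfc (fun _ : ℝ => (1 : ℝ)) A := by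
            apply cfc_congr
            intro t ht
            field_simp [hne t ht]
        _ = 1 := by rw [cfc_const_one ℝ A]
    have h2 : cfc (fun t : ℝ => (t - x)⁻¹) A * (A - algebraMap ℝ (E →L[ℂ] E) x) = 1 := by
      rw [← hAx, ← cfc_mul _ _ A hcont_inv (by fun_prop)]
      calc cfc (fun t : ℝ => (t - x)⁻¹ * (t - x)) A
          = cfc (fun _ : ℝ => (1 : ℝ)) A := by
            apply cfc_congr
            intro t ht
            field_simp [hne t ht]
        _ = 1 := by rw [cfc_const_one ℝ A]
    exact ⟨⟨_, _, h1, h2⟩, rfl⟩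
  -- norm bound on S
  set b : ℝ := max 1 (max (lm / (x - lm)) (lp / (lp - x))) with hb
  have hb0 : (0 : ℝ) ≤ b := le_trans zero_le_one (le_max_left _ _)
  have hxlm' : 0 < x - lm := sub_pos.mpr hxlm
  have hxlp' : 0 < lp - x := sub_pos.mpr hxlp
  have hSb : ‖S‖ ≤ b := by
    apply norm_cfc_le hb0
    intro t ht
    rcases hgapA t ht with h | h
    · -- t ≤ lm
      rcases le_or_gt t 0 with h0 | h0
      · -- |t/(t-x)| ≤ 1
        refine le_trans ?_ (le_max_left _ _)
        rw [Real.norm_eq_abs, abs_mul, abs_inv]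
        have h1 : |t - x| = x - t := by rw [abs_sub_comm]; exact abs_of_pos (by linarith)
        have h2 : |t| = -t := abs_of_nonpos h0
        rw [h1, h2]
        have hxt : (0:ℝ) < x - t := by linarith
        calc -t * (x - t)⁻¹ ≤ (x - t) * (x - t)⁻¹ :=
              mul_le_mul_of_nonneg_right (by linarith) (by positivity)
          _ = 1 := by field_simp
      · -- 0 < t ≤ lm : bound lm/(x-lm)
        refine le_trans ?_ (le_trans (le_max_left _ _) (le_max_right 1 _))
        rw [Real.norm_eq_abs, abs_mul, abs_inv]
        have h1 : |t - x| = x - t := by rw [abs_sub_comm]; exact abs_of_pos (by linarith)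
        have h2 : |t| = t := abs_of_pos h0
        rw [h1, h2, div_eq_mul_inv]
        have hxt : 0 < x - t := by linarith
        apply mul_le_mul h (by
          apply inv_anti₀ hxlm'
          linarith) (by positivity) (by positivity)
    · -- lp ≤ t : bound lp/(lp-x)
      refine le_trans ?_ (le_trans (le_max_right _ _) (le_max_right 1 _))
      rw [Real.norm_eq_abs, abs_mul, abs_inv]
      have htx : 0 < t - x := by linarith
      have h1 : |t - x| = t - x := abs_of_pos htx
      have h2 : |t| = t := abs_of_pos (by linarith)
      rw [h1, h2, div_eq_mul_inv]
      rw [← sub_nonneg]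
      have key : lp * (lp - x)⁻¹ - t * (t - x)⁻¹
          = x * (t - lp) * ((lp - x)⁻¹ * (t - x)⁻¹) := by
        field_simp
        ring
      rw [key]
      have : 0 ≤ t - lp := by linarith
      positivity
  have hbκ : b * κ < 1 := by
    rw [hb, max_mul_of_nonneg _ _ hκ0, max_mul_of_nonneg _ _ hκ0]
    refine max_lt (by linarith) (max_lt ?_ ?_)
    · rw [div_mul_eq_mul_div, div_lt_one hxlm']
      nlinarith
    · rw [div_mul_eq_mul_div, div_lt_one hxlp']
      nlinarith
  have hSΔ : ‖-(S * Δ)‖ < 1 := by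
    rw [norm_neg]
    calc ‖S * Δ‖ ≤ ‖S‖ * ‖Δ‖ := norm_mul_le S Δ
      _ ≤ b * κ := mul_le_mul hSb hΔκ (norm_nonneg Δ) hb0
      _ < 1 := hbκ
  have hunit2 : IsUnit (1 + S * Δ) := by
    have := (Units.oneSub (-(S * Δ)) hSΔ).isUnit
    rwa [Units.val_oneSub, sub_neg_eq_add] at this
  -- factorization
  have hfact : A * (1 + Δ) - algebraMap ℝ (E →L[ℂ] E) x
      = (A - algebraMap ℝ (E →L[ℂ] E) x) * (1 + S * Δ) := by
    have : (A - algebraMap ℝ (E →L[ℂ] E) x) * (1 + S * Δ)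
        = (A - algebraMap ℝ (E →L[ℂ] E) x) + ((A - algebraMap ℝ (E →L[ℂ] E) x) * S) * Δ := by
      noncomm_ring
    rw [this, hAxS]
    noncomm_ring
  have hunit : IsUnit (algebraMap ℝ (E →L[ℂ] E) x - A * (1 + Δ)) := by
    have := (hAxunit.mul hunit2).neg
    rw [← hfact] at this
    rwa [neg_sub] at this
  have hxR : x ∉ spectrum ℝ (A * (1 + Δ)) := fun hmem => (spectrum.mem_iff.mp hmem) hunit
  rw [hspecJG']
  intro hmem
  apply hxR
  have : algebraMap ℝ ℂ x ∈ spectrum ℂ (A * (1 + Δ)) := by simpa using hmem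
  exact spectrum.of_algebraMap_mem ℂ this
end

section
/- Let G be bounded selfadjoint positive definite, J a hermitian symmetry, κ < 1, and G' = G^{1/2}(I+Δ)G^{1/2} with Δ selfadjoint, ‖Δ‖ ≤ κ. If (λ⁻, λ⁺) ⊂ ρ(JG) with λ⁻ < 0 < λ⁺, then ((1−κ)λ⁻, (1−κ)λ⁺) ⊂ ρ(JG'). -/
open scoped InnerProductSpace

section Aux

variable {E : Type*} [NormedAddCommGroup E] [InnerProductSpace ℂ E] [CompleteSpace E]

lemma aux_isUnit_of_coercive (T : E →L[ℂ] E) (c : ℝ) (hc : 0 < c)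
    (h : ∀ ψ : E, c * ‖ψ‖ ^ 2 ≤ (⟪T ψ, ψ⟫_ℂ).re) : IsUnit T := by
  refine ContinuousLinearMap.isUnit_of_forall_le_norm_inner_map T (c := ⟨c, hc.le⟩) hc ?_
  intro x
  calc ‖x‖ ^ 2 * c = c * ‖x‖ ^ 2 := mul_comm _ _
    _ ≤ (⟪T x, x⟫_ℂ).re := h x
    _ ≤ ‖⟪T x, x⟫_ℂ‖ := by
        exact Complex.re_le_norm _

lemma aux_cfc_quad (A : E →L[ℂ] E) (hA : IsSelfAdjoint A) (p : ℝ)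
    (hp : ∀ t ∈ spectrum ℝ A, 0 ≤ t ^ 2 - p * t) :
    (0 : E →L[ℂ] E) ≤ A ^ 2 - p • A := by
  have h1 : (0 : E →L[ℂ] E) ≤ cfc (fun t : ℝ => t ^ 2 - p * t) A := cfc_nonneg hp
  have h2 : cfc (fun t : ℝ => t ^ 2 - p * t) A = A ^ 2 - p • A := by
    rw [cfc_sub _ _ A, cfc_pow_id A 2 hA, cfc_const_mul_id p A hA]
  rwa [h2] at h1

lemma aux_cfc_lb (A : E →L[ℂ] E) (hA : IsSelfAdjoint A) (m : ℝ)
    (hm : ∀ t ∈ spectrum ℝ A, m ≤ t ^ 2) :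
    (0 : E →L[ℂ] E) ≤ A ^ 2 - algebraMap ℝ (E →L[ℂ] E) m := by
  have h1 : (0 : E →L[ℂ] E) ≤ cfc (fun t : ℝ => t ^ 2 - m) A :=
    cfc_nonneg (fun t ht => by simpa using hm t ht)
  have h2 : cfc (fun t : ℝ => t ^ 2 - m) A = A ^ 2 - algebraMap ℝ (E →L[ℂ] E) m := by
    rw [cfc_sub _ _ A, cfc_pow_id A 2 hA, cfc_const m A hA]
  rwa [h2] at h1

lemma aux_form (A : E →L[ℂ] E) (hA : IsSelfAdjoint A) (p : ℝ)
    (h : (0 : E →L[ℂ] E) ≤ A ^ 2 - p • A) (ψ : E) :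
    p * (⟪A ψ, ψ⟫_ℂ).re ≤ ‖A ψ‖ ^ 2 := by
  have h1 := ((ContinuousLinearMap.nonneg_iff_isPositive _).mp h).re_inner_nonneg_left ψ
  have e1 : (A ^ 2 - p • A) ψ = A (A ψ) - p • (A ψ) := by
    simp [pow_two, ContinuousLinearMap.mul_apply]
  have e2 : ⟪A (A ψ), ψ⟫_ℂ = ⟪A ψ, A ψ⟫_ℂ := hA.isSymmetric (A ψ) ψ
  have e3 : ⟪p • (A ψ), ψ⟫_ℂ = (p : ℂ) * ⟪A ψ, ψ⟫_ℂ := by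
    rw [show p • (A ψ) = (p : ℂ) • (A ψ) from (Complex.coe_smul p (A ψ)).symm,
      inner_smul_left]
    simp
  rw [e1, inner_sub_left, e2, e3] at h1
  have e4 : RCLike.re ⟪A ψ, A ψ⟫_ℂ = ‖A ψ‖ ^ 2 := inner_self_eq_norm_sq (𝕜 := ℂ) _
  simp only [map_sub, e4, RCLike.re_to_complex, Complex.re_ofReal_mul] at h1 ⊢
  linarith

lemma aux_lb (A : E →L[ℂ] E) (hA : IsSelfAdjoint A) (m : ℝ)
    (h : (0 : E →L[ℂ] E) ≤ A ^ 2 - algebraMap ℝ (E →L[ℂ] E) m) (ψ : E) :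
    m * ‖ψ‖ ^ 2 ≤ ‖A ψ‖ ^ 2 := by
  have h1 := ((ContinuousLinearMap.nonneg_iff_isPositive _).mp h).re_inner_nonneg_left ψ
  have e1 : (A ^ 2 - algebraMap ℝ (E →L[ℂ] E) m) ψ = A (A ψ) - m • ψ := by
    simp [pow_two, ContinuousLinearMap.mul_apply, Algebra.algebraMap_eq_smul_one]
  have e2 : ⟪A (A ψ), ψ⟫_ℂ = ⟪A ψ, A ψ⟫_ℂ := hA.isSymmetric (A ψ) ψ
  have e3 : ⟪m • ψ, ψ⟫_ℂ = (m : ℂ) * ⟪ψ, ψ⟫_ℂ := by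
    rw [show m • ψ = (m : ℂ) • ψ from (Complex.coe_smul m ψ).symm, inner_smul_left]
    simp
  rw [e1, inner_sub_left, e2, e3] at h1
  have e4 : RCLike.re ⟪A ψ, A ψ⟫_ℂ = ‖A ψ‖ ^ 2 := inner_self_eq_norm_sq (𝕜 := ℂ) _
  have e5 : RCLike.re ⟪ψ, ψ⟫_ℂ = ‖ψ‖ ^ 2 := inner_self_eq_norm_sq (𝕜 := ℂ) _
  simp only [map_sub, e4, RCLike.re_to_complex, Complex.re_ofReal_mul] at h1
  rw [show (⟪ψ, ψ⟫_ℂ).re = ‖ψ‖ ^ 2 from e5] at h1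
  linarith

end Aux

set_option maxHeartbeats 1000000 in
/-- spectral gap inclusion, central gap case:
`(λ⁻, λ⁺) ⊂ ρ(JG)` with `λ⁻ < 0 < λ⁺` implies `((1-κ)λ⁻, (1-κ)λ⁺) ⊂ ρ(JG')`. -/
theorem stmt_6 {E : Type*} [NormedAddCommGroup E] [InnerProductSpace ℂ E] [CompleteSpace E]
    (J G Ghalf Ginvhalf Δ : E →L[ℂ] E)
    (hJsa : IsSelfAdjoint J) (hJinv : J * J = 1)
    (hGsa : IsSelfAdjoint G) (γ : ℝ) (hγ : 0 < γ)
    (hGpos : ∀ ψ : E, γ * ‖ψ‖ ^ 2 ≤ (⟪G ψ, ψ⟫_ℂ).re)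
    (hGhsa : IsSelfAdjoint Ghalf) (hGhsq : Ghalf * Ghalf = G)
    (hGhpos : ∀ ψ : E, 0 ≤ (⟪Ghalf ψ, ψ⟫_ℂ).re)
    (hinv1 : Ghalf * Ginvhalf = 1) (hinv2 : Ginvhalf * Ghalf = 1)
    (hΔsa : IsSelfAdjoint Δ) (κ : ℝ) (hΔκ : ‖Δ‖ ≤ κ) (hκ : κ < 1)
    (G' : E →L[ℂ] E) (hG' : G' = Ghalf * (1 + Δ) * Ghalf)
    (lm lp : ℝ) (hlm : lm < 0) (hlp : 0 < lp)
    (hgap : ∀ x : ℝ, lm < x → x < lp → (x : ℂ) ∉ spectrum ℂ (J * G)) :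
    ∀ x : ℝ, (1 - κ) * lm < x → x < (1 - κ) * lp → (x : ℂ) ∉ spectrum ℂ (J * G') := by
  intro x hx1 hx2
  have hκ0 : 0 ≤ κ := (norm_nonneg Δ).trans hΔκ
  have h1κ : 0 < 1 - κ := by linarith
  obtain ⟨A, hAdef⟩ : ∃ A : E →L[ℂ] E, A = Ghalf * J * Ghalf := ⟨_, rfl⟩
  have hA : IsSelfAdjoint A := by
    simp only [hAdef, IsSelfAdjoint, star_mul, hGhsa.star_eq, hJsa.star_eq, mul_assoc]
  -- units
  have hGhUnit : IsUnit Ghalf := ⟨⟨Ghalf, Ginvhalf, hinv1, hinv2⟩, rfl⟩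
  have hGinvUnit : IsUnit Ginvhalf := ⟨⟨Ginvhalf, Ghalf, hinv2, hinv1⟩, rfl⟩
  -- conjugation identity 1 : spectrum of A equals spectrum of J*G on the gap
  have conj1 : ∀ z : ℂ, Ghalf * (algebraMap ℂ (E →L[ℂ] E) z - J * G) * Ginvhalf = algebraMap ℂ (E →L[ℂ] E) z - A := by
    intro z
    rw [mul_sub, sub_mul]
    congr 1
    · rw [Algebra.algebraMap_eq_smul_one, mul_smul_comm, mul_one, smul_mul_assoc, hinv1]
    · rw [← hGhsq, hAdef]
      simp only [← mul_assoc]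
      rw [mul_assoc (Ghalf * J * Ghalf) Ghalf Ginvhalf, hinv1, mul_one]
  have hAspec : ∀ t : ℝ, lm < t → t < lp → (t : ℂ) ∉ spectrum ℂ A := by
    intro t ht1 ht2 hmem
    have h0 := hgap t ht1 ht2
    rw [spectrum.notMem_iff] at h0
    have : IsUnit (algebraMap ℂ (E →L[ℂ] E) (t : ℂ) - A) := by
      rw [← conj1]
      exact (hGhUnit.mul h0).mul hGinvUnit
    exact (spectrum.notMem_iff.mpr this) hmem
  have hspecR : ∀ t ∈ spectrum ℝ A, t ≤ lm ∨ lp ≤ t := by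
    intro t ht
    by_contra hcon
    push_neg at hcon
    have hmem : (t : ℂ) ∈ spectrum ℂ A := by
      have := spectrum.algebraMap_mem ℂ ht
      simpa using this
    exact hAspec t hcon.1 hcon.2 hmem
  -- A is a unit
  have hAunit : IsUnit A := by
    have h0 : ((0 : ℝ) : ℂ) ∉ spectrum ℂ A := hAspec 0 hlm hlp
    rw [Complex.ofReal_zero] at h0
    exact (spectrum.zero_notMem_iff ℂ).mp h0
  obtain ⟨μ, hμdef⟩ : ∃ μ : ℝ, μ = min lp (-lm) := ⟨_, rfl⟩
  have hμ : 0 < μ := hμdef ▸ lt_min hlp (by linarith)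
  -- operator inequalities
  have hop1 : (0 : E →L[ℂ] E) ≤ A ^ 2 - lp • A := by
    refine aux_cfc_quad A hA lp ?_
    intro t ht
    rcases hspecR t ht with h | h
    · nlinarith
    · nlinarith
  have hop2 : (0 : E →L[ℂ] E) ≤ A ^ 2 - lm • A := by
    refine aux_cfc_quad A hA lm ?_
    intro t ht
    rcases hspecR t ht with h | h
    · nlinarith
    · nlinarith
  have hop3 : (0 : E →L[ℂ] E) ≤ A ^ 2 - algebraMap ℝ (E →L[ℂ] E) (μ ^ 2) := by
    refine aux_cfc_lb A hA (μ ^ 2) ?_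
    intro t ht
    have hμp : μ ≤ lp := hμdef ▸ min_le_left _ _
    have hμm : μ ≤ -lm := hμdef ▸ min_le_right _ _
    rcases hspecR t ht with h | h
    · nlinarith
    · nlinarith
  have hform_p : ∀ ψ : E, lp * (⟪A ψ, ψ⟫_ℂ).re ≤ ‖A ψ‖ ^ 2 := aux_form A hA lp hop1
  have hform_m : ∀ ψ : E, lm * (⟪A ψ, ψ⟫_ℂ).re ≤ ‖A ψ‖ ^ 2 := aux_form A hA lm hop2
  have hnorm : ∀ ψ : E, μ ^ 2 * ‖ψ‖ ^ 2 ≤ ‖A ψ‖ ^ 2 := aux_lb A hA (μ ^ 2) hop3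
  -- lower bound for 1 + Δ
  have hDelta : ∀ ψ : E, (1 - κ) * ‖ψ‖ ^ 2 ≤ (⟪(1 + Δ) ψ, ψ⟫_ℂ).re := by
    intro ψ
    have e1 : (1 + Δ) ψ = ψ + Δ ψ := by simp
    have h5 : ‖⟪Δ ψ, ψ⟫_ℂ‖ ≤ κ * ‖ψ‖ ^ 2 := by
      refine (norm_inner_le_norm _ _).trans ?_
      have h6 := Δ.le_opNorm ψ
      have h7 : ‖Δ ψ‖ ≤ κ * ‖ψ‖ := h6.trans (by nlinarith [norm_nonneg ψ])
      nlinarith [norm_nonneg ψ]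
    have h8 : |(⟪Δ ψ, ψ⟫_ℂ).re| ≤ κ * ‖ψ‖ ^ 2 := by
      refine (Complex.abs_re_le_norm _).trans ?_
      exact h5
    have h9 := inner_self_eq_norm_sq (𝕜 := ℂ) ψ
    rw [RCLike.re_to_complex] at h9
    rw [e1, inner_add_left, Complex.add_re, h9]
    have := abs_le.mp h8
    linarith [this.1]
  -- the key operator K = A(1+Δ)A - x A
  obtain ⟨K, hKdef⟩ : ∃ K : E →L[ℂ] E, K = A * (1 + Δ) * A - x • A := ⟨_, rfl⟩
  have hKform : ∀ ψ : E, (⟪K ψ, ψ⟫_ℂ).re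
      = (⟪(1 + Δ) (A ψ), A ψ⟫_ℂ).re - x * (⟪A ψ, ψ⟫_ℂ).re := by
    intro ψ
    have e1 : K ψ = A ((1 + Δ) (A ψ)) - x • (A ψ) := by
      simp [hKdef, ContinuousLinearMap.mul_apply]
    have e2 : ⟪A ((1 + Δ) (A ψ)), ψ⟫_ℂ = ⟪(1 + Δ) (A ψ), A ψ⟫_ℂ := hA.isSymmetric _ ψ
    have e3 : ⟪x • (A ψ), ψ⟫_ℂ = (x : ℂ) * ⟪A ψ, ψ⟫_ℂ := by
      rw [show x • (A ψ) = (x : ℂ) • (A ψ) from (Complex.coe_smul x (A ψ)).symm,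
        inner_smul_left]
      simp
    rw [e1, inner_sub_left, e2, e3, Complex.sub_re, Complex.re_ofReal_mul]
  -- coercivity of K
  obtain ⟨c, hc, hco⟩ : ∃ c : ℝ, 0 < c ∧ ∀ ψ : E, c * ‖ψ‖ ^ 2 ≤ (⟪K ψ, ψ⟫_ℂ).re := by
    rcases le_or_gt 0 x with hx0 | hx0
    · have hxl : x / lp < 1 - κ := (div_lt_iff₀ hlp).mpr (by linarith)
      have hxl0 : 0 ≤ x / lp := div_nonneg hx0 hlp.le
      refine ⟨((1 - κ) - x / lp) * μ ^ 2, mul_pos (by linarith) (pow_pos hμ 2), ?_⟩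
      intro ψ
      have hmul := mul_le_mul_of_nonneg_left (hform_p ψ) hxl0
      rw [← mul_assoc, div_mul_cancel₀ x hlp.ne'] at hmul
      have h10 := hDelta (A ψ)
      have h11 := hnorm ψ
      rw [hKform ψ]
      have h12 : ((1 - κ) - x / lp) * (μ ^ 2 * ‖ψ‖ ^ 2) ≤ ((1 - κ) - x / lp) * ‖A ψ‖ ^ 2 :=
        mul_le_mul_of_nonneg_left h11 (by linarith)
      linarith
    · have hxl : x / lm < 1 - κ := by
        rw [div_lt_iff_of_neg hlm]; linarith
      have hxl0 : 0 ≤ x / lm := by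
        rw [div_nonneg_iff]; right; exact ⟨hx0.le, hlm.le⟩
      refine ⟨((1 - κ) - x / lm) * μ ^ 2, mul_pos (by linarith) (pow_pos hμ 2), ?_⟩
      intro ψ
      have hmul := mul_le_mul_of_nonneg_left (hform_m ψ) hxl0
      rw [← mul_assoc, div_mul_cancel₀ x hlm.ne] at hmul
      have h10 := hDelta (A ψ)
      have h11 := hnorm ψ
      rw [hKform ψ]
      have h12 : ((1 - κ) - x / lm) * (μ ^ 2 * ‖ψ‖ ^ 2) ≤ ((1 - κ) - x / lm) * ‖A ψ‖ ^ 2 :=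
        mul_le_mul_of_nonneg_left h11 (by linarith)
      linarith
  have hKunit : IsUnit K := aux_isUnit_of_coercive K c hc hco
  -- factor K = (A(1+Δ) - x) A
  have hsm : algebraMap ℂ (E →L[ℂ] E) (x : ℂ) * A = x • A := by
    rw [Algebra.algebraMap_eq_smul_one, smul_mul_assoc, one_mul, Complex.coe_smul]
  have hfac : (A * (1 + Δ) - algebraMap ℂ (E →L[ℂ] E) (x : ℂ)) * A = K := by
    rw [hKdef, sub_mul, hsm]
  have hunit2 : IsUnit (A * (1 + Δ) - algebraMap ℂ (E →L[ℂ] E) (x : ℂ)) := by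
    have he : A * (1 + Δ) - algebraMap ℂ (E →L[ℂ] E) (x : ℂ) = K * ↑hAunit.unit⁻¹ := by
      rw [← hfac, mul_assoc (A * (1 + Δ) - algebraMap ℂ (E →L[ℂ] E) (x : ℂ)) A, hAunit.mul_val_inv, mul_one]
    rw [he]
    exact hKunit.mul hAunit.unit⁻¹.isUnit
  have hunit3 : IsUnit (algebraMap ℂ (E →L[ℂ] E) (x : ℂ) - A * (1 + Δ)) := by
    have := hunit2.neg
    rwa [neg_sub] at this
  have conj2 : Ginvhalf * (algebraMap ℂ (E →L[ℂ] E) (x : ℂ) - A * (1 + Δ)) * Ghalf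
      = algebraMap ℂ (E →L[ℂ] E) (x : ℂ) - J * G' := by
    rw [mul_sub, sub_mul]
    congr 1
    · rw [Algebra.algebraMap_eq_smul_one, mul_smul_comm, mul_one, smul_mul_assoc, hinv2]
    · rw [hG', hAdef]
      simp only [← mul_assoc]
      rw [hinv2, one_mul]
  rw [spectrum.notMem_iff, ← conj2]
  exact (hGinvUnit.mul hunit3).mul hGhUnit
end

section
/- Let J = J* = J⁻¹ and G, G' bounded selfadjoint positive definite operators with the same γ-bounds, satisfying (1−κ)(Gψ,ψ) ≤ (G'ψ,ψ) ≤ (1+κ)(Gψ,ψ) for all ψ, κ < 1. For k ≥ 1 let λₖ⁺ = inf over k-dimensional subspaces T of {ψ : (Jψ,ψ) > 0} of sup over nonzero φ ∈ T of ‖G^{1/2}φ‖²/(Jφ,φ), and λₖ'⁺ the analogous quantity for G'. Then |λₖ'⁺ − λₖ⁺| ≤ κ λₖ⁺ for all k. -/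
open scoped InnerProductSpace

/-- The variational quantity `λₖ⁺`: infimum over `k`-dimensional subspaces `T` of the
`J`-positive cone of the supremum over nonzero `φ ∈ T` of `‖G^{1/2}φ‖²/(Jφ,φ)`. -/
noncomputable def lamPlus {E : Type*} [NormedAddCommGroup E] [InnerProductSpace ℂ E]
    (J Ghalf : E →L[ℂ] E) (k : ℕ) : ℝ :=
  ⨅ T : {T : Submodule ℂ E // Module.finrank ℂ T = k ∧
      ∀ ψ ∈ T, ψ ≠ 0 → 0 < (⟪J ψ, ψ⟫_ℂ).re},
    ⨆ φ : {φ : E // φ ∈ (T : Submodule ℂ E) ∧ φ ≠ 0},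
      ‖Ghalf (φ : E)‖ ^ 2 / (⟪J (φ : E), (φ : E)⟫_ℂ).re

/-- Helper: comparison of real suprema under two-sided pointwise bounds. -/
lemma aux_sup {ι : Sort*} [Nonempty ι] (f f' : ι → ℝ) (c d : ℝ) (hc : 0 < c) (hd : 0 < d)
    (h1 : ∀ i, f' i ≤ c * f i) (h2 : ∀ i, d * f i ≤ f' i) :
    (⨆ i, f' i) ≤ c * ⨆ i, f i := by
  by_cases hb : BddAbove (Set.range f)
  · refine ciSup_le fun i => (h1 i).trans ?_
    exact mul_le_mul_of_nonneg_left (le_ciSup hb i) hc.le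
  · have hb' : ¬ BddAbove (Set.range f') := by
      rintro ⟨M, hM⟩
      refine hb ⟨M / d, ?_⟩
      rintro _ ⟨i, rfl⟩
      have h3 : f' i ≤ M := hM (Set.mem_range_self i)
      rw [le_div_iff₀ hd]
      have := h2 i
      linarith
    rw [Real.iSup_of_not_bddAbove hb, Real.iSup_of_not_bddAbove hb', mul_zero]

/-- if `(1-κ)(Gψ,ψ) ≤ (G'ψ,ψ) ≤ (1+κ)(Gψ,ψ)` with `κ < 1`, then the
variational eigenvalues satisfy `|λₖ'⁺ - λₖ⁺| ≤ κ λₖ⁺` for all `k ≥ 1`. -/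
theorem stmt_10 {E : Type*} [NormedAddCommGroup E] [InnerProductSpace ℂ E] [CompleteSpace E]
    (J G G' Ghalf G'half : E →L[ℂ] E)
    (hJsa : IsSelfAdjoint J) (hJinv : J * J = 1)
    (hGsa : IsSelfAdjoint G) (hG'sa : IsSelfAdjoint G') (γ : ℝ) (hγ : 0 < γ)
    (hGpos : ∀ ψ : E, γ * ‖ψ‖ ^ 2 ≤ (⟪G ψ, ψ⟫_ℂ).re)
    (hG'pos : ∀ ψ : E, γ * ‖ψ‖ ^ 2 ≤ (⟪G' ψ, ψ⟫_ℂ).re)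
    (hGhsa : IsSelfAdjoint Ghalf) (hGhsq : Ghalf * Ghalf = G)
    (hG'hsa : IsSelfAdjoint G'half) (hG'hsq : G'half * G'half = G')
    (κ : ℝ) (hκ : κ < 1)
    (hlow : ∀ ψ : E, (1 - κ) * (⟪G ψ, ψ⟫_ℂ).re ≤ (⟪G' ψ, ψ⟫_ℂ).re)
    (hhigh : ∀ ψ : E, (⟪G' ψ, ψ⟫_ℂ).re ≤ (1 + κ) * (⟪G ψ, ψ⟫_ℂ).re) :
    ∀ k : ℕ, 1 ≤ k → |lamPlus J G'half k - lamPlus J Ghalf k| ≤ κ * lamPlus J Ghalf k := by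
  intro k hk
  -- the square-root identity
  have normsq : ∀ (A B : E →L[ℂ] E), IsSelfAdjoint A → A * A = B →
      ∀ φ : E, ‖A φ‖ ^ 2 = (⟪B φ, φ⟫_ℂ).re := by
    intro A B hA hAB φ
    have h1 : ⟪B φ, φ⟫_ℂ = ⟪A φ, A φ⟫_ℂ := by
      rw [← hAB]
      calc ⟪(A * A) φ, φ⟫_ℂ = ⟪(ContinuousLinearMap.adjoint A) (A φ), φ⟫_ℂ := by
              rw [hA.adjoint_eq]; rfl
        _ = ⟪A φ, A φ⟫_ℂ := ContinuousLinearMap.adjoint_inner_left A _ _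
    rw [h1]
    exact (inner_self_eq_norm_sq (𝕜 := ℂ) (A φ)).symm
  by_cases hne : Nonempty {T : Submodule ℂ E // Module.finrank ℂ T = k ∧
      ∀ ψ ∈ T, ψ ≠ 0 → 0 < (⟪J ψ, ψ⟫_ℂ).re}
  swap
  · rw [not_nonempty_iff] at hne
    unfold lamPlus
    rw [Real.iInf_of_isEmpty, Real.iInf_of_isEmpty]
    simp
  -- nontrivial case: get a nonzero vector, hence κ ≥ 0
  obtain ⟨T0⟩ := hne
  have hT0ne : (T0 : Submodule ℂ E) ≠ ⊥ := by
    intro h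
    have := T0.2.1
    rw [h, finrank_bot] at this
    omega
  obtain ⟨ψ0, -, hψ0⟩ := Submodule.exists_mem_ne_zero_of_ne_bot hT0ne
  have hκ0 : 0 ≤ κ := by
    have hg : 0 < (⟪G ψ0, ψ0⟫_ℂ).re := by
      have h0 : 0 < ‖ψ0‖ := norm_pos_iff.mpr hψ0
      nlinarith [hGpos ψ0, mul_pos hγ (pow_pos h0 2)]
    nlinarith [hlow ψ0, hhigh ψ0]
  have h1κ : 0 < 1 - κ := by linarith
  have h1κ' : 0 < 1 + κ := by linarith
  -- per-subspace nonemptiness of the φ-index, and pointwise bounds on the Rayleigh quotients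
  set ιT := {T : Submodule ℂ E // Module.finrank ℂ T = k ∧
      ∀ ψ ∈ T, ψ ≠ 0 → 0 < (⟪J ψ, ψ⟫_ℂ).re} with hιT
  haveI : Nonempty ιT := ⟨T0⟩
  have hφne : ∀ T : ιT, Nonempty {φ : E // φ ∈ (T : Submodule ℂ E) ∧ φ ≠ 0} := by
    intro T
    have hTne : (T : Submodule ℂ E) ≠ ⊥ := by
      intro h
      have := T.2.1
      rw [h, finrank_bot] at this
      omega
    obtain ⟨φ, hφ, hφ0⟩ := Submodule.exists_mem_ne_zero_of_ne_bot hTne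
    exact ⟨⟨φ, hφ, hφ0⟩⟩
  set S : ιT → ℝ := fun T => ⨆ φ : {φ : E // φ ∈ (T : Submodule ℂ E) ∧ φ ≠ 0},
      ‖Ghalf (φ : E)‖ ^ 2 / (⟪J (φ : E), (φ : E)⟫_ℂ).re with hS
  set S' : ιT → ℝ := fun T => ⨆ φ : {φ : E // φ ∈ (T : Submodule ℂ E) ∧ φ ≠ 0},
      ‖G'half (φ : E)‖ ^ 2 / (⟪J (φ : E), (φ : E)⟫_ℂ).re with hS'
  have hlam : lamPlus J Ghalf k = ⨅ T, S T := rfl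
  have hlam' : lamPlus J G'half k = ⨅ T, S' T := rfl
  have hptJ : ∀ (T : ιT) (φ : {φ : E // φ ∈ (T : Submodule ℂ E) ∧ φ ≠ 0}),
      0 < (⟪J (φ : E), (φ : E)⟫_ℂ).re := fun T φ => T.2.2 φ φ.2.1 φ.2.2
  -- pointwise two-sided bounds
  have hpt1 : ∀ (T : ιT) (φ : {φ : E // φ ∈ (T : Submodule ℂ E) ∧ φ ≠ 0}),
      ‖G'half (φ : E)‖ ^ 2 / (⟪J (φ : E), (φ : E)⟫_ℂ).re ≤
        (1 + κ) * (‖Ghalf (φ : E)‖ ^ 2 / (⟪J (φ : E), (φ : E)⟫_ℂ).re) := by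
    intro T φ
    rw [normsq G'half G' hG'hsa hG'hsq, normsq Ghalf G hGhsa hGhsq, mul_div_assoc']
    exact (div_le_div_iff_of_pos_right (hptJ T φ)).mpr (hhigh (φ : E))
  have hpt2 : ∀ (T : ιT) (φ : {φ : E // φ ∈ (T : Submodule ℂ E) ∧ φ ≠ 0}),
      (1 - κ) * (‖Ghalf (φ : E)‖ ^ 2 / (⟪J (φ : E), (φ : E)⟫_ℂ).re) ≤
        ‖G'half (φ : E)‖ ^ 2 / (⟪J (φ : E), (φ : E)⟫_ℂ).re := by
    intro T φ
    rw [normsq G'half G' hG'hsa hG'hsq, normsq Ghalf G hGhsa hGhsq, mul_div_assoc']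
    exact (div_le_div_iff_of_pos_right (hptJ T φ)).mpr (hlow (φ : E))
  -- supremum comparisons
  have hsup1 : ∀ T : ιT, S' T ≤ (1 + κ) * S T := by
    intro T
    haveI := hφne T
    exact aux_sup _ _ (1 + κ) (1 - κ) h1κ' h1κ (hpt1 T) (hpt2 T)
  have hsup2 : ∀ T : ιT, (1 - κ) * S T ≤ S' T := by
    intro T
    haveI := hφne T
    have := aux_sup (ι := {φ : E // φ ∈ (T : Submodule ℂ E) ∧ φ ≠ 0}) (fun φ => ‖G'half (φ : E)‖ ^ 2 / (⟪J (φ : E), (φ : E)⟫_ℂ).re)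
      (fun φ => ‖Ghalf (φ : E)‖ ^ 2 / (⟪J (φ : E), (φ : E)⟫_ℂ).re)
      (1 - κ)⁻¹ (1 + κ)⁻¹ (by positivity) (by positivity)
      (fun φ => by
        rw [le_inv_mul_iff₀ h1κ]
        exact hpt2 T φ)
      (fun φ => by
        rw [inv_mul_le_iff₀ h1κ']
        exact hpt1 T φ)
    have h5 : S T ≤ (1 - κ)⁻¹ * S' T := this
    calc (1 - κ) * S T ≤ (1 - κ) * ((1 - κ)⁻¹ * S' T) :=
          mul_le_mul_of_nonneg_left h5 h1κ.le
      _ = S' T := by field_simp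
  -- nonnegativity of the suprema
  have hSnn : ∀ T : ιT, 0 ≤ S T := fun T =>
    Real.iSup_nonneg fun φ => div_nonneg (by positivity) (hptJ T φ).le
  have hS'nn : ∀ T : ιT, 0 ≤ S' T := fun T =>
    Real.iSup_nonneg fun φ => div_nonneg (by positivity) (hptJ T φ).le
  -- infimum comparisons
  have hinf1 : (⨅ T, S' T) ≤ (1 + κ) * ⨅ T, S T := by
    rw [Real.mul_iInf_of_nonneg h1κ'.le]
    exact ciInf_mono ⟨0, by rintro _ ⟨T, rfl⟩; exact hS'nn T⟩ hsup1
  have hinf2 : (1 - κ) * (⨅ T, S T) ≤ ⨅ T, S' T := by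
    rw [Real.mul_iInf_of_nonneg h1κ.le]
    refine ciInf_mono ⟨0, ?_⟩ hsup2
    rintro _ ⟨T, rfl⟩
    exact mul_nonneg h1κ.le (hSnn T)
  have hlamnn : 0 ≤ ⨅ T, S T := Real.iInf_nonneg hSnn
  rw [hlam, hlam', abs_le]
  constructor <;> nlinarith [hinf1, hinf2]
end

section
/- Let A be a bounded operator with ‖A‖ ≤ b < 1. Then the block operator 𝐀 = [[I, A*],[A, I]] on X ⊕ X admits the factorization 𝐀 = R* R where R = [[(I − A*A)^{1/2}, 0],[A, I]] (block Cholesky factorization), and R is boundedly invertible with inverse L = [[(I−A*A)^{-1/2}, 0],[−A(I−A*A)^{-1/2}, I]]. -/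
open scoped InnerProductSpace

/-- The block operator `[[P, Q],[R, S]]` on `X ⊕ X` (with the Hilbert space `ℓ²`-sum). -/
noncomputable def blockOp {E : Type*} [NormedAddCommGroup E] [InnerProductSpace ℂ E]
    (P Q R S : E →L[ℂ] E) : WithLp 2 (E × E) →L[ℂ] WithLp 2 (E × E) :=
  ((WithLp.prodContinuousLinearEquiv 2 ℂ E E).symm.toContinuousLinearMap).comp
    ((((P.comp (ContinuousLinearMap.fst ℂ E E) + Q.comp (ContinuousLinearMap.snd ℂ E E)).prod
      (R.comp (ContinuousLinearMap.fst ℂ E E) + S.comp (ContinuousLinearMap.snd ℂ E E)))).comp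
      (WithLp.prodContinuousLinearEquiv 2 ℂ E E).toContinuousLinearMap)

section aux

variable {E : Type*} [NormedAddCommGroup E] [InnerProductSpace ℂ E]

lemma blockOp_fst (P Q R S : E →L[ℂ] E) (x : WithLp 2 (E × E)) :
    (blockOp P Q R S x).fst = P x.fst + Q x.snd := rfl

lemma blockOp_snd (P Q R S : E →L[ℂ] E) (x : WithLp 2 (E × E)) :
    (blockOp P Q R S x).snd = R x.fst + S x.snd := rfl

lemma blockOp_mul (P Q R S P' Q' R' S' : E →L[ℂ] E) :
    blockOp P Q R S * blockOp P' Q' R' S' =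
      blockOp (P*P'+Q*R') (P*Q'+Q*S') (R*P'+S*R') (R*Q'+S*S') := by
  ext x : 1
  apply (WithLp.prodContinuousLinearEquiv 2 ℂ E E).injective
  ext <;>
    simp [ContinuousLinearMap.mul_apply, blockOp_fst, blockOp_snd, map_add] <;> abel

lemma blockOp_one : blockOp (1 : E →L[ℂ] E) 0 0 1 = 1 := by
  ext x : 1
  apply (WithLp.prodContinuousLinearEquiv 2 ℂ E E).injective
  ext <;> simp [blockOp_fst, blockOp_snd]

lemma blockOp_adjoint [CompleteSpace E] (P Q R S : E →L[ℂ] E) :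
    ContinuousLinearMap.adjoint (blockOp P Q R S) =
      blockOp (ContinuousLinearMap.adjoint P) (ContinuousLinearMap.adjoint R)
        (ContinuousLinearMap.adjoint Q) (ContinuousLinearMap.adjoint S) := by
  symm
  rw [ContinuousLinearMap.eq_adjoint_iff]
  intro x y
  simp only [WithLp.prod_inner_apply, WithLp.ofLp_fst, WithLp.ofLp_snd, blockOp_fst, blockOp_snd, inner_add_left,
    inner_add_right, ContinuousLinearMap.adjoint_inner_left]
  ring

end aux

/-- block Cholesky factorization `𝐀 = R* R` with
`R = [[(I-A*A)^{1/2}, 0],[A, I]]`, whose inverse is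
`L = [[(I-A*A)^{-1/2}, 0],[-A(I-A*A)^{-1/2}, I]]`. Here `T = (I-A*A)^{1/2}` and
`Tinv = (I-A*A)^{-1/2}` are characterized by the stated hypotheses. -/
theorem stmt_12 {E : Type*} [NormedAddCommGroup E] [InnerProductSpace ℂ E] [CompleteSpace E]
    (A T Tinv : E →L[ℂ] E) (b : ℝ) (hA : ‖A‖ ≤ b) (hb : b < 1)
    (hTsa : IsSelfAdjoint T) (hTpos : ∀ ψ : E, 0 ≤ (⟪T ψ, ψ⟫_ℂ).re)
    (hTsq : T * T = 1 - ContinuousLinearMap.adjoint A * A)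
    (hTi1 : T * Tinv = 1) (hTi2 : Tinv * T = 1) :
    blockOp 1 (ContinuousLinearMap.adjoint A) A 1 =
      ContinuousLinearMap.adjoint (blockOp T 0 A 1) * blockOp T 0 A 1 ∧
    blockOp T 0 A 1 * blockOp Tinv 0 (-(A * Tinv)) 1 = 1 ∧
    blockOp Tinv 0 (-(A * Tinv)) 1 * blockOp T 0 A 1 = 1 := by
  refine ⟨?_, ?_, ?_⟩
  · rw [blockOp_adjoint, hTsa.adjoint_eq,
      show ContinuousLinearMap.adjoint (0 : E →L[ℂ] E) = 0 from map_zero _,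
      show ContinuousLinearMap.adjoint (1 : E →L[ℂ] E) = 1 by
        rw [ContinuousLinearMap.one_def, ContinuousLinearMap.adjoint_id], blockOp_mul]
    congr 1 <;> simp [hTsq] <;> ring_nf <;> simp [mul_assoc]
  · rw [blockOp_mul]
    rw [show T * Tinv + 0 * -(A * Tinv) = 1 by simp [hTi1],
      show T * 0 + 0 * 1 = (0 : E →L[ℂ] E) by simp,
      show A * Tinv + 1 * -(A * Tinv) = (0 : E →L[ℂ] E) by simp,
      show A * 0 + 1 * 1 = (1 : E →L[ℂ] E) by simp, blockOp_one]
  · rw [blockOp_mul]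
    rw [show Tinv * T + 0 * A = 1 by simp [hTi2],
      show Tinv * 0 + 0 * 1 = (0 : E →L[ℂ] E) by simp,
      show -(A * Tinv) * T + 1 * A = (0 : E →L[ℂ] E) by
        rw [neg_mul, mul_assoc, hTi2, mul_one, one_mul, neg_add_cancel],
      show -(A * Tinv) * 0 + 1 * 1 = (1 : E →L[ℂ] E) by simp, blockOp_one]
end

section
/- Let B be a bounded operator on a Hilbert space X and a ≥ 0. Consider 𝐓ₐ = [[aI, B*],[B, 0]] on X ⊕ X. Then ‖𝐓ₐ‖ ≤ (a + √(a² + 4‖B‖²))/2. -/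
open scoped InnerProductSpace

lemma stmt13_key (a b μ u v : ℝ) (ha : 0 ≤ a) (hμ0 : 0 ≤ μ) (hμa : a ≤ μ)
    (hμsq : μ ^ 2 = a * μ + b ^ 2) :
    (a * u + b * v) ^ 2 + (b * u) ^ 2 ≤ μ ^ 2 * (u ^ 2 + v ^ 2) := by
  rcases eq_or_lt_of_le hμ0 with hz | hp
  · have haz : a = 0 := le_antisymm (hμa.trans hz.symm.le) ha
    have hbz : b = 0 := by nlinarith [hμsq]
    simp [haz, hbz, ← hz]
  · have hid : μ * (μ ^ 2 * (u ^ 2 + v ^ 2) - ((a * u + b * v) ^ 2 + (b * u) ^ 2)) =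
        a * (b * u - μ * v) ^ 2 := by
      linear_combination ((μ + a) * u ^ 2 + μ * v ^ 2) * hμsq
    have h2 : 0 ≤ μ * (μ ^ 2 * (u ^ 2 + v ^ 2) - ((a * u + b * v) ^ 2 + (b * u) ^ 2)) := by
      rw [hid]; positivity
    nlinarith [mul_pos hp hp]

/-- the block operator `𝐓ₐ = [[aI, B*],[B, 0]]` satisfies
`‖𝐓ₐ‖ ≤ (a + √(a² + 4‖B‖²))/2`. -/
theorem stmt_13 {E : Type*} [NormedAddCommGroup E] [InnerProductSpace ℂ E] [CompleteSpace E]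
    (B : E →L[ℂ] E) (a : ℝ) (ha : 0 ≤ a) :
    ‖blockOp ((a : ℂ) • (1 : E →L[ℂ] E)) (ContinuousLinearMap.adjoint B) B 0‖ ≤
      (a + Real.sqrt (a ^ 2 + 4 * ‖B‖ ^ 2)) / 2 := by
  set b := ‖B‖ with hb
  have hb0 : 0 ≤ b := norm_nonneg B
  set μ := (a + Real.sqrt (a ^ 2 + 4 * b ^ 2)) / 2 with hμ
  have hs : Real.sqrt (a ^ 2 + 4 * b ^ 2) ^ 2 = a ^ 2 + 4 * b ^ 2 :=
    Real.sq_sqrt (by positivity)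
  have hμa : a ≤ μ := by
    have h1 := Real.sqrt_le_sqrt (show a ^ 2 ≤ a ^ 2 + 4 * b ^ 2 by nlinarith)
    rw [Real.sqrt_sq ha] at h1
    rw [hμ]; linarith
  have hμ0 : 0 ≤ μ := le_trans ha hμa
  have hμsq : μ ^ 2 = a * μ + b ^ 2 := by
    rw [hμ]; field_simp; nlinarith [hs]
  apply ContinuousLinearMap.opNorm_le_bound _ hμ0
  intro x
  have hB1 : ‖B x.fst‖ ≤ b * ‖x.fst‖ := B.le_opNorm _
  have hB2 : ‖ContinuousLinearMap.adjoint B x.snd‖ ≤ b * ‖x.snd‖ := by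
    have : ‖ContinuousLinearMap.adjoint B‖ = b := by
      rw [hb]; exact (ContinuousLinearMap.adjoint : (E →L[ℂ] E) ≃ₗᵢ⋆[ℂ] _).norm_map B
    calc ‖ContinuousLinearMap.adjoint B x.snd‖ ≤ ‖ContinuousLinearMap.adjoint B‖ * ‖x.snd‖ :=
          (ContinuousLinearMap.adjoint B).le_opNorm _
      _ = b * ‖x.snd‖ := by rw [this]
  set T := blockOp ((a : ℂ) • (1 : E →L[ℂ] E)) (ContinuousLinearMap.adjoint B) B 0 with hT
  have hfst : (T x).fst = (a : ℂ) • x.fst + ContinuousLinearMap.adjoint B x.snd := rfl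
  have hsnd : (T x).snd = B x.fst := by
    have : (T x).snd = B x.fst + (0 : E →L[ℂ] E) x.snd := rfl
    rw [this]; simp
  have h1 : ‖(T x).fst‖ ≤ a * ‖x.fst‖ + b * ‖x.snd‖ := by
    rw [hfst]
    calc ‖(a : ℂ) • x.fst + ContinuousLinearMap.adjoint B x.snd‖
        ≤ ‖(a : ℂ) • x.fst‖ + ‖ContinuousLinearMap.adjoint B x.snd‖ := norm_add_le _ _
      _ ≤ a * ‖x.fst‖ + b * ‖x.snd‖ := by
          rw [norm_smul]
          simp only [Complex.norm_real, Real.norm_eq_abs, abs_of_nonneg ha]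
          linarith
  have h2 : ‖(T x).snd‖ ≤ b * ‖x.fst‖ := by rw [hsnd]; exact hB1
  have hsq : ‖T x‖ ^ 2 ≤ μ ^ 2 * ‖x‖ ^ 2 := by
    rw [WithLp.prod_norm_sq_eq_of_L2, WithLp.prod_norm_sq_eq_of_L2]
    have hu : (0:ℝ) ≤ ‖x.fst‖ := norm_nonneg _
    have hv : (0:ℝ) ≤ ‖x.snd‖ := norm_nonneg _
    have hf : (0:ℝ) ≤ ‖(T x).fst‖ := norm_nonneg _
    have hg : (0:ℝ) ≤ ‖(T x).snd‖ := norm_nonneg _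
    have hf2 : ‖(T x).fst‖ ^ 2 ≤ (a * ‖x.fst‖ + b * ‖x.snd‖) ^ 2 :=
      pow_le_pow_left₀ hf h1 2
    have hg2 : ‖(T x).snd‖ ^ 2 ≤ (b * ‖x.fst‖) ^ 2 := pow_le_pow_left₀ hg h2 2
    have key := stmt13_key a b μ ‖x.fst‖ ‖x.snd‖ ha hμ0 hμa hμsq
    linarith
  calc ‖T x‖ = Real.sqrt (‖T x‖ ^ 2) := (Real.sqrt_sq (norm_nonneg _)).symm
    _ ≤ Real.sqrt (μ ^ 2 * ‖x‖ ^ 2) := Real.sqrt_le_sqrt hsq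
    _ = μ * ‖x‖ := by
        rw [show μ ^ 2 * ‖x‖ ^ 2 = (μ * ‖x‖) ^ 2 by ring,
          Real.sqrt_sq (by positivity)]
end

section
/- Let A, δA be bounded with ‖A‖ ≤ b < 1 and suppose δA*A + A*δA = 0 (disjoint supports condition). Then for 𝐀 = [[I,A*],[A,I]] and δ𝐀 = [[0,δA*],[δA,0]], one has |(δ𝐀ψ,ψ)| ≤ (‖δA‖/√(1−b²)) (𝐀ψ,ψ) for all ψ ∈ X ⊕ X. -/
open scoped InnerProductSpace

lemma aux_ineq (d s t a b q : ℝ) (hd : 0 ≤ d) (hs : 0 ≤ s) (ht : 0 ≤ t) (ha : 0 ≤ a)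
    (hb : 0 ≤ b) (hAx : a ≤ b * s) (hq : q ^ 2 = 1 - b ^ 2) (hqpos : 0 < q) :
    2 * (d * s * t) * q ≤ d * (s ^ 2 - a ^ 2 + t ^ 2) := by
  have h1 : a ^ 2 ≤ b ^ 2 * s ^ 2 := by nlinarith
  have h2 : 2 * (s * t) * q ≤ s ^ 2 - a ^ 2 + t ^ 2 := by nlinarith [sq_nonneg (q * s - t)]
  nlinarith [mul_le_mul_of_nonneg_left h2 hd]

/-- under the disjoint-supports condition `δA*A + A*δA = 0`, the form of
`δ𝐀 = [[0,δA*],[δA,0]]` is bounded by `‖δA‖/√(1-b²)` times the form of `𝐀 = [[I,A*],[A,I]]`. -/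
theorem stmt_14 {E : Type*} [NormedAddCommGroup E] [InnerProductSpace ℂ E] [CompleteSpace E]
    (A δA : E →L[ℂ] E) (b : ℝ) (hA : ‖A‖ ≤ b) (hb : b < 1)
    (hdisj : ContinuousLinearMap.adjoint δA * A + ContinuousLinearMap.adjoint A * δA = 0) :
    ∀ ψ : WithLp 2 (E × E),
      |(⟪blockOp 0 (ContinuousLinearMap.adjoint δA) δA 0 ψ, ψ⟫_ℂ).re| ≤
        ‖δA‖ / Real.sqrt (1 - b ^ 2) *
          (⟪blockOp 1 (ContinuousLinearMap.adjoint A) A 1 ψ, ψ⟫_ℂ).re := by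
  intro ψ
  set x := ψ.fst with hx
  set y := ψ.snd with hy
  have hb0 : (0:ℝ) ≤ b := le_trans (norm_nonneg A) hA
  have h1b : (0:ℝ) < 1 - b ^ 2 := by nlinarith
  have hsq : Real.sqrt (1 - b ^ 2) ^ 2 = 1 - b ^ 2 := Real.sq_sqrt h1b.le
  have hspos : 0 < Real.sqrt (1 - b ^ 2) := Real.sqrt_pos.mpr h1b
  -- left form
  have hL : (⟪blockOp 0 (ContinuousLinearMap.adjoint δA) δA 0 ψ, ψ⟫_ℂ).re
      = 2 * (⟪δA x, y⟫_ℂ).re := by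
    simp only [blockOp]
    simp [WithLp.prod_inner_apply, ContinuousLinearMap.adjoint_inner_left]
    rw [← inner_conj_symm ψ.snd, Complex.conj_re]
    ring
  -- right form
  have hR : (⟪blockOp 1 (ContinuousLinearMap.adjoint A) A 1 ψ, ψ⟫_ℂ).re
      = ‖x‖ ^ 2 + ‖y‖ ^ 2 + 2 * (⟪A x, y⟫_ℂ).re := by
    simp only [blockOp]
    simp [WithLp.prod_inner_apply, ContinuousLinearMap.adjoint_inner_left, inner_add_left]
    rw [← inner_conj_symm ψ.snd (A ψ.fst), Complex.conj_re,
      show ((‖ψ.fst‖ : ℂ) ^ 2).re = ‖ψ.fst‖ ^ 2 by rw [← Complex.ofReal_pow, Complex.ofReal_re],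
      show ((‖ψ.snd‖ : ℂ) ^ 2).re = ‖ψ.snd‖ ^ 2 by rw [← Complex.ofReal_pow, Complex.ofReal_re]]
    ring
  -- disjointness pointwise
  have hre0 : (⟪δA x, A x⟫_ℂ).re = 0 := by
    have h := congrArg (fun T : E →L[ℂ] E => (⟪T x, x⟫_ℂ).re) hdisj
    simp only [ContinuousLinearMap.add_apply, ContinuousLinearMap.mul_apply,
      inner_add_left, ContinuousLinearMap.adjoint_inner_left,
      ContinuousLinearMap.zero_apply, inner_zero_left, Complex.add_re,
      Complex.zero_re] at h
    have hsym : (⟪δA x, A x⟫_ℂ).re = (⟪A x, δA x⟫_ℂ).re := by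
      rw [← inner_conj_symm (δA x) (A x), Complex.conj_re]
    linarith
  -- shift: re⟪δA x, y⟫ = re⟪δA x, y + A x⟫
  have hshift : (⟪δA x, y⟫_ℂ).re = (⟪δA x, y + A x⟫_ℂ).re := by
    rw [inner_add_right, Complex.add_re, hre0, add_zero]
  -- norm bounds
  set s := ‖x‖ with hs
  set t := ‖y + A x‖ with ht
  set a := ‖A x‖ with ha
  have hbd : |(⟪δA x, y + A x⟫_ℂ).re| ≤ ‖δA‖ * s * t := by
    calc |(⟪δA x, y + A x⟫_ℂ).re| ≤ ‖(⟪δA x, y + A x⟫_ℂ)‖ := Complex.abs_re_le_norm _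
    _ ≤ ‖δA x‖ * t := norm_inner_le_norm _ _
    _ ≤ ‖δA‖ * s * t := by
        have := δA.le_opNorm x
        have : ‖δA x‖ ≤ ‖δA‖ * s := this
        nlinarith [norm_nonneg (y + A x)]
  have hAx : a ≤ b * s := le_trans (A.le_opNorm x)
    (mul_le_mul_of_nonneg_right hA (norm_nonneg x))
  -- RHS rewrite
  have hRHS : ‖x‖ ^ 2 + ‖y‖ ^ 2 + 2 * (⟪A x, y⟫_ℂ).re = s ^ 2 - a ^ 2 + t ^ 2 := by
    have hexp : t ^ 2 = ‖y‖ ^ 2 + 2 * (⟪y, A x⟫_ℂ).re + a ^ 2 := by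
      rw [ht, ha, @norm_add_sq ℂ]
      simp [RCLike.re_to_complex]
    rw [← inner_conj_symm y (A x), Complex.conj_re] at hexp
    rw [hexp]; ring
  rw [hL, hR, hshift, hRHS]
  rw [abs_mul, abs_two]
  have key : 2 * (‖δA‖ * s * t) ≤ ‖δA‖ / Real.sqrt (1 - b ^ 2) * (s ^ 2 - a ^ 2 + t ^ 2) := by
    rw [div_mul_eq_mul_div, le_div_iff₀ hspos]
    exact aux_ineq ‖δA‖ s t a b _ (norm_nonneg _) (norm_nonneg _) (norm_nonneg _)
      (norm_nonneg _) hb0 hAx hsq hspos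
  calc 2 * |(⟪δA x, y + A x⟫_ℂ).re| ≤ 2 * (‖δA‖ * s * t) := by linarith
  _ ≤ _ := key
end
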